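/- arXiv:1902.11171 — 2 statements merged into one kernel-verified Lean document; each statement's English description precedes it below -/
import Mathlib

section
/- The number of natural numbers n ≤ x such that either the largest prime factor P(n) satisfies P(n) ≤ x^{1/log log x}, or P(n)^2 divides n, is O(x/(log x)^2) for sufficiently large x. -/
open Finset Nat

lemma myGeom_le {r : ℝ} (h0 : 0 ≤ r) (h1 : r < 1) (M : ℕ) :
    ∑ e ∈ range M, r ^ e ≤ (1 - r)⁻¹ := by
  rw [geom_sum_eq h1.ne]
  have h2 : (0:ℝ) < 1 - r := by linarith
  have h3 : 0 ≤ r ^ M := pow_nonneg h0 M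
  have heq : (r ^ M - 1) / (r - 1) = (1 - r ^ M) / (1 - r) := by
    rw [← neg_div_neg_eq]; ring_nf
  rw [heq, div_le_iff₀ h2, inv_mul_cancel₀ h2.ne']
  linarith

lemma euler_sum_le (σ : ℝ) (hσ : 0 < σ) (N : ℕ) :
    ∀ K, ∑ n ∈ Nat.smoothNumbersUpTo N K, ((n:ℝ)) ^ (-σ) ≤
      ∏ p ∈ K.primesBelow, (1 - (p:ℝ) ^ (-σ))⁻¹ := by
  intro K
  induction K with
  | zero =>
      have hsub : Nat.smoothNumbersUpTo N 0 ⊆ {1} := by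
        intro n hn
        rw [Nat.mem_smoothNumbersUpTo, Nat.smoothNumbers_zero] at hn
        simpa using hn.2
      have : ∑ n ∈ Nat.smoothNumbersUpTo N 0, ((n:ℝ)) ^ (-σ) ≤
          ∑ n ∈ ({1} : Finset ℕ), ((n:ℝ)) ^ (-σ) := by
        apply Finset.sum_le_sum_of_subset_of_nonneg hsub
        intro i _ _
        positivity
      simp only [Finset.sum_singleton, Nat.cast_one, Real.one_rpow] at this
      simpa [Nat.primesBelow_zero] using this
  | succ K ih =>
      by_cases hK : K.Prime
      · set r : ℝ := (K:ℝ) ^ (-σ) with hr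
        have hK2 : 2 ≤ K := hK.two_le
        have hKpos : (0:ℝ) < (K:ℝ) := by positivity
        have hr0 : 0 ≤ r := Real.rpow_nonneg hKpos.le _
        have hr1 : r < 1 := by
          rw [hr, Real.rpow_neg hKpos.le]
          rw [inv_lt_one_iff₀]
          right
          rw [show (1:ℝ) = (1:ℝ)^σ from (Real.one_rpow σ).symm]
          exact Real.rpow_lt_rpow (by norm_num) (by exact_mod_cast hK2.trans_lt' one_lt_two) hσ
        set A := Nat.smoothNumbersUpTo N (K+1) with hA
        set ψ : ℕ → ℕ × ℕ := fun n => (n.factorization K, ordCompl[K] n) with hψ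
        have hrec : ∀ n ∈ A, n = K ^ (ψ n).1 * (ψ n).2 := fun n _ =>
          (Nat.ordProj_mul_ordCompl_eq_self n K).symm
        have hmemA : ∀ n ∈ A, n ≤ N ∧ n ∈ Nat.smoothNumbers (K+1) := fun n hn =>
          Nat.mem_smoothNumbersUpTo.mp hn
        have hmem : ∀ n ∈ A, ψ n ∈ Finset.range (N+1) ×ˢ Nat.smoothNumbersUpTo N K := by
          intro n hn
          obtain ⟨hnN, hsm⟩ := hmemA n hn
          have hn0 : n ≠ 0 := Nat.ne_zero_of_mem_smoothNumbers hsm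
          have hnpos : 0 < n := Nat.pos_of_ne_zero hn0
          rw [Finset.mem_product]
          constructor
          · rw [Finset.mem_range]
            have h1 : K ^ (ψ n).1 ≤ n :=
              Nat.le_of_dvd hnpos (Nat.ordProj_dvd n K)
            have h2 : (ψ n).1 < 2 ^ (ψ n).1 := Nat.lt_two_pow_self
            have h3 : 2 ^ (ψ n).1 ≤ K ^ (ψ n).1 := Nat.pow_le_pow_left hK2 _
            omega
          · rw [Nat.mem_smoothNumbersUpTo]
            have hdvd : (ψ n).2 ∣ n := Nat.ordCompl_dvd n K
            refine ⟨(Nat.le_of_dvd hnpos hdvd).trans hnN, ?_⟩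
            rw [Nat.mem_smoothNumbers']
            intro p hp hpd
            have hpn : p ∣ n := hpd.trans hdvd
            have hlt : p < K + 1 := Nat.mem_smoothNumbers'.mp hsm p hp hpn
            have hne : p ≠ K := by
              rintro rfl
              exact Nat.not_dvd_ordCompl hp hn0 hpd
            omega
        have hinj : ∀ x ∈ A, ∀ y ∈ A, ψ x = ψ y → x = y := by
          intro x hx y hy hxy
          rw [hrec x hx, hrec y hy, hxy]
        have himg : ∑ n ∈ A, ((n:ℝ)) ^ (-σ) =
            ∑ q ∈ A.image ψ, r ^ q.1 * ((q.2:ℝ)) ^ (-σ) := by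
          rw [Finset.sum_image hinj]
          apply Finset.sum_congr rfl
          intro n hn
          conv_lhs => rw [hrec n hn]
          push_cast
          rw [Real.mul_rpow (by positivity) (by positivity)]
          congr 1
          rw [← Real.rpow_natCast (K:ℝ) (ψ n).1, ← Real.rpow_natCast r (ψ n).1,
            ← Real.rpow_mul hKpos.le, hr, ← Real.rpow_mul hKpos.le]
          ring_nf
        have hsub : A.image ψ ⊆ Finset.range (N+1) ×ˢ Nat.smoothNumbersUpTo N K := by
          intro q hq
          obtain ⟨n, hn, rfl⟩ := Finset.mem_image.mp hq
          exact hmem n hn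
        have hbound : ∑ q ∈ A.image ψ, r ^ q.1 * ((q.2:ℝ)) ^ (-σ) ≤
            ∑ q ∈ Finset.range (N+1) ×ˢ Nat.smoothNumbersUpTo N K,
              r ^ q.1 * ((q.2:ℝ)) ^ (-σ) := by
          apply Finset.sum_le_sum_of_subset_of_nonneg hsub
          intro q _ _
          have : (0:ℝ) ≤ r ^ q.1 := pow_nonneg hr0 _
          positivity
        have hprod : ∑ q ∈ Finset.range (N+1) ×ˢ Nat.smoothNumbersUpTo N K,
              r ^ q.1 * ((q.2:ℝ)) ^ (-σ) =
            (∑ e ∈ Finset.range (N+1), r ^ e) *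
              ∑ m ∈ Nat.smoothNumbersUpTo N K, ((m:ℝ)) ^ (-σ) := by
          rw [Finset.sum_product, Finset.sum_mul]
          apply Finset.sum_congr rfl
          intro e _
          rw [Finset.mul_sum]
        have hfin : ∑ n ∈ A, ((n:ℝ)) ^ (-σ) ≤
            (1 - r)⁻¹ * ∏ p ∈ K.primesBelow, (1 - (p:ℝ) ^ (-σ))⁻¹ := by
          rw [himg]
          refine hbound.trans ?_
          rw [hprod]
          apply mul_le_mul (myGeom_le hr0 hr1 _) ih
          · exact Finset.sum_nonneg fun m _ => Real.rpow_nonneg (by positivity) _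
          · exact inv_nonneg.mpr (by linarith)
        rw [show K + 1 = K.succ from rfl, Nat.primesBelow_succ]
        rw [if_pos hK, Finset.prod_insert (by simp [Nat.mem_primesBelow])]
        exact hfin
      · rw [show K + 1 = K.succ from rfl]
        have h1 : Nat.smoothNumbersUpTo N K.succ = Nat.smoothNumbersUpTo N K := by
          unfold Nat.smoothNumbersUpTo
          simp only [Nat.smoothNumbers_succ hK]
        rw [h1, Nat.primesBelow_succ, if_neg hK]
        exact ih

lemma chebyshev (n : ℕ) :
    ∑ p ∈ Nat.primesBelow (n+1), Real.log p ≤ n * Real.log 4 := by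
  have h1 : Nat.primesBelow (n+1) = Finset.filter (fun p => p.Prime) (Finset.range (n+1)) := rfl
  have h2 : ∑ p ∈ Nat.primesBelow (n+1), Real.log p = Real.log (primorial n) := by
    rw [primorial, h1]
    push_cast
    rw [Real.log_prod]
    intro p hp
    have := (Finset.mem_filter.mp hp).2.pos
    positivity
  rw [h2]
  calc Real.log (primorial n) ≤ Real.log ((4:ℕ)^n) := by
        apply Real.log_le_log (by exact_mod_cast primorial_pos n)
        exact_mod_cast primorial_le_4_pow n
    _ = n * Real.log 4 := by push_cast; rw [Real.log_pow]

lemma block_card (j : ℕ) (hj : 1 ≤ j) :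
    ((Nat.primesBelow (2^(j+1)+1) \ Nat.primesBelow (2^j+1)).card : ℝ) ≤ 2^(j+2) / j := by
  set B := Nat.primesBelow (2^(j+1)+1) \ Nat.primesBelow (2^j+1) with hB
  have hjpos : (0:ℝ) < j := by exact_mod_cast hj
  have hlog2 : (0:ℝ) < Real.log 2 := Real.log_pos (by norm_num)
  have hlb : ∀ p ∈ B, (j:ℝ) * Real.log 2 ≤ Real.log p := by
    intro p hp
    rw [Finset.mem_sdiff, Nat.mem_primesBelow] at hp
    have hp2 : 2^j < p := by
      rcases Nat.lt_or_ge p (2^j+1) with h | h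
      · exact absurd (Nat.mem_primesBelow.mpr ⟨h, hp.1.2⟩) hp.2
      · omega
    calc (j:ℝ) * Real.log 2 = Real.log ((2:ℝ)^j) := by rw [Real.log_pow]
      _ ≤ Real.log p := Real.log_le_log (by positivity) (by exact_mod_cast hp2.le)
  have hsum : (B.card : ℝ) * ((j:ℝ) * Real.log 2) ≤ ∑ p ∈ B, Real.log p := by
    calc (B.card : ℝ) * ((j:ℝ) * Real.log 2) = ∑ _p ∈ B, (j:ℝ) * Real.log 2 := by
          rw [Finset.sum_const, nsmul_eq_mul]
      _ ≤ ∑ p ∈ B, Real.log p := Finset.sum_le_sum hlb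
  have hsub : ∑ p ∈ B, Real.log p ≤ ∑ p ∈ Nat.primesBelow (2^(j+1)+1), Real.log p := by
    apply Finset.sum_le_sum_of_subset_of_nonneg Finset.sdiff_subset
    intro p hp _
    have := (Nat.prime_of_mem_primesBelow hp).two_le
    have : (1:ℝ) ≤ p := by exact_mod_cast this.trans' (by norm_num)
    exact Real.log_nonneg this
  have hcheb := chebyshev (2^(j+1))
  have hlog4 : Real.log 4 = 2 * Real.log 2 := by
    rw [show (4:ℝ) = 2^2 by norm_num, Real.log_pow]; push_cast; ring
  have : (B.card : ℝ) * ((j:ℝ) * Real.log 2) ≤ 2^(j+1) * (2 * Real.log 2) := by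
    calc (B.card : ℝ) * ((j:ℝ) * Real.log 2) ≤ ∑ p ∈ B, Real.log p := hsum
      _ ≤ ∑ p ∈ Nat.primesBelow (2^(j+1)+1), Real.log p := hsub
      _ ≤ (2^(j+1) : ℕ) * Real.log 4 := hcheb
      _ = 2^(j+1) * (2 * Real.log 2) := by rw [hlog4]; push_cast; ring
  rw [le_div_iff₀ hjpos]
  have hpow : (2:ℝ)^(j+2) = 2 * 2^(j+1) := by ring
  nlinarith [hlog2, hpow]

lemma primesBelow_three : Nat.primesBelow 3 = {2} := by decide

lemma primesum_dyadic (σ : ℝ) (hσ0 : 0 ≤ σ) :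
    ∀ J : ℕ, ∑ p ∈ Nat.primesBelow (2^(J+1)+1), ((p:ℝ))^(-σ) ≤
      1 + ∑ j ∈ Finset.Icc 1 J, (2^(j+2)/(j:ℝ)) * (2:ℝ)^(-(σ*j)) := by
  intro J
  induction J with
  | zero =>
      rw [show (2:ℕ)^(0+1)+1 = 3 by norm_num, primesBelow_three, Finset.sum_singleton]
      have h1 : ((2:ℕ):ℝ)^(-σ) ≤ 1 :=
        Real.rpow_le_one_of_one_le_of_nonpos (by norm_num) (by linarith)
      simpa using h1
  | succ J ih =>
      have hsub : Nat.primesBelow (2^(J+1)+1) ⊆ Nat.primesBelow (2^(J+2)+1) := by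
        apply Finset.filter_subset_filter
        apply Finset.range_subset_range.mpr
        have : (2:ℕ)^(J+1) ≤ 2^(J+2) := Nat.pow_le_pow_right (by norm_num) (by omega)
        omega
      set B := Nat.primesBelow (2^(J+2)+1) \ Nat.primesBelow (2^(J+1)+1) with hB
      have hsplit : ∑ p ∈ B, ((p:ℝ))^(-σ) + ∑ p ∈ Nat.primesBelow (2^(J+1)+1), ((p:ℝ))^(-σ)
          = ∑ p ∈ Nat.primesBelow (2^(J+2)+1), ((p:ℝ))^(-σ) := Finset.sum_sdiff hsub
      have hBle : ∑ p ∈ B, ((p:ℝ))^(-σ) ≤ (2^(J+3)/((J+1):ℝ)) * (2:ℝ)^(-(σ*(J+1))) := by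
        have hterm : ∀ p ∈ B, ((p:ℝ))^(-σ) ≤ (2:ℝ)^(-(σ*(J+1))) := by
          intro p hp
          rw [Finset.mem_sdiff, Nat.mem_primesBelow] at hp
          have hp2 : 2^(J+1) < p := by
            rcases Nat.lt_or_ge p (2^(J+1)+1) with h | h
            · exact absurd (Nat.mem_primesBelow.mpr ⟨h, hp.1.2⟩) hp.2
            · omega
          have hbase : ((2:ℝ)^(J+1)) ≤ (p:ℝ) := by exact_mod_cast hp2.le
          have := Real.rpow_le_rpow_of_nonpos (by positivity) hbase (neg_nonpos.mpr hσ0)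
          refine this.trans_eq ?_
          rw [← Real.rpow_natCast (2:ℝ) (J+1), ← Real.rpow_mul (by norm_num)]
          push_cast
          ring_nf
        calc ∑ p ∈ B, ((p:ℝ))^(-σ) ≤ ∑ _p ∈ B, (2:ℝ)^(-(σ*(J+1))) :=
              Finset.sum_le_sum hterm
          _ = (B.card : ℝ) * (2:ℝ)^(-(σ*(J+1))) := by rw [Finset.sum_const, nsmul_eq_mul]
          _ ≤ (2^(J+3)/((J+1):ℝ)) * (2:ℝ)^(-(σ*(J+1))) := by
              apply mul_le_mul_of_nonneg_right _ (Real.rpow_nonneg (by norm_num) _)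
              have := block_card (J+1) (by omega)
              convert this using 3 <;> push_cast <;> rfl
      calc ∑ p ∈ Nat.primesBelow (2^(J+2)+1), ((p:ℝ))^(-σ)
          = ∑ p ∈ B, ((p:ℝ))^(-σ) + ∑ p ∈ Nat.primesBelow (2^(J+1)+1), ((p:ℝ))^(-σ) := by
            rw [hsplit]
        _ ≤ (2^(J+3)/((J+1):ℝ)) * (2:ℝ)^(-(σ*(J+1))) +
            (1 + ∑ j ∈ Finset.Icc 1 J, (2^(j+2)/(j:ℝ)) * (2:ℝ)^(-(σ*j))) := by
            exact add_le_add hBle ih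
        _ = 1 + ∑ j ∈ Finset.Icc 1 (J+1), (2^(j+2)/(j:ℝ)) * (2:ℝ)^(-(σ*j)) := by
            rw [Finset.sum_Icc_succ_top (by omega : 1 ≤ J+1)]
            push_cast
            ring

lemma harmonic_sum_le (J : ℕ) (hJ : 1 ≤ J) :
    ∑ j ∈ Finset.Icc 1 J, ((j:ℝ))⁻¹ ≤ 1 + Real.log J := by
  have h1 : ∀ n : ℕ, ∑ j ∈ Finset.Icc 1 n, ((j:ℝ))⁻¹ = ((harmonic n : ℚ) : ℝ) := by
    intro n
    induction n with
    | zero => simp [harmonic]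
    | succ n ihn =>
        rw [Finset.sum_Icc_succ_top (by omega : 1 ≤ n+1), ihn, harmonic_succ]
        push_cast
        ring
  rw [h1 J]
  exact harmonic_le_one_add_log J

lemma geom_exp_sum (δ : ℝ) (hδ0 : 0 < δ) (J : ℕ) :
    ∑ j ∈ Finset.Icc 1 J, Real.exp (δ * j) ≤ Real.exp (δ * (J+1)) / δ := by
  have ht1 : (1:ℝ) < Real.exp δ := by rw [Real.one_lt_exp_iff]; exact hδ0
  have hterm : ∀ j : ℕ, Real.exp (δ * j) = (Real.exp δ)^j := by
    intro j; rw [← Real.exp_nat_mul]; ring_nf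
  have h2 : ∑ j ∈ Finset.Icc 1 J, Real.exp (δ * j) ≤
      ∑ j ∈ Finset.range (J+1), (Real.exp δ)^j := by
    simp_rw [hterm]
    apply Finset.sum_le_sum_of_subset_of_nonneg
    · intro j hj
      rw [Finset.mem_Icc] at hj
      rw [Finset.mem_range]
      omega
    · intro j _ _
      positivity
  have h3 : ∑ j ∈ Finset.range (J+1), (Real.exp δ)^j =
      ((Real.exp δ)^(J+1) - 1) / (Real.exp δ - 1) := geom_sum_eq ht1.ne' (J+1)
  have h4 : δ ≤ Real.exp δ - 1 := by
    have := Real.add_one_le_exp δ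
    linarith
  have h5 : ((Real.exp δ)^(J+1) - 1) / (Real.exp δ - 1) ≤ (Real.exp δ)^(J+1) / δ := by
    apply div_le_div₀ (by positivity) (by linarith [pow_nonneg (le_of_lt (lt_trans zero_lt_one ht1)) (J+1)]) hδ0 h4
  calc ∑ j ∈ Finset.Icc 1 J, Real.exp (δ * j) ≤ ((Real.exp δ)^(J+1) - 1) / (Real.exp δ - 1) := by
        rw [← h3]; exact h2
    _ ≤ (Real.exp δ)^(J+1) / δ := h5
    _ = Real.exp (δ * (J+1)) / δ := by
        congr 1
        rw [← hterm (J+1)]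
        push_cast
        ring_nf

lemma dyadic_sum_bound (σ δ : ℝ) (J : ℕ) (hJ : 1 ≤ J) (hσ0 : 0 ≤ σ)
    (hδ : δ = (1-σ) * Real.log 2) (hδ0 : 0 < δ) (hδ1 : δ ≤ 1) :
    ∑ j ∈ Finset.Icc 1 J, (2^(j+2)/(j:ℝ)) * (2:ℝ)^(-(σ*j)) ≤
      4 * (Real.exp 2 * (1 + Real.log J) + Real.exp 1 * Real.exp (δ*J)) := by
  have hterm : ∀ j ∈ Finset.Icc 1 J, (2^(j+2)/(j:ℝ)) * (2:ℝ)^(-(σ*j)) =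
      4 * (Real.exp (δ*j) / j) := by
    intro j hj
    rw [Finset.mem_Icc] at hj
    have h1 : (2:ℝ)^(j+2) = 4 * 2^j := by ring
    have h2 : (2:ℝ)^j * (2:ℝ)^(-(σ*j)) = Real.exp (δ*j) := by
      rw [← Real.rpow_natCast (2:ℝ) j, ← Real.rpow_add (by norm_num)]
      rw [Real.rpow_def_of_pos (by norm_num), hδ]
      ring_nf
    rw [h1]
    field_simp
    rw [mul_comm (j:ℝ) σ, mul_comm (j:ℝ) δ, h2]
  rw [Finset.sum_congr rfl hterm, ← Finset.mul_sum]
  have hper : ∀ j ∈ Finset.Icc 1 J, Real.exp (δ*j) / j ≤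
      Real.exp 2 * (j:ℝ)⁻¹ + δ * Real.exp (δ*j) := by
    intro j hj
    rw [Finset.mem_Icc] at hj
    have hjpos : (0:ℝ) < j := by exact_mod_cast hj.1
    rcases le_or_gt (δ * j) 2 with h | h
    · have : Real.exp (δ*j) ≤ Real.exp 2 := Real.exp_le_exp.mpr h
      have hnn : 0 ≤ δ * Real.exp (δ*j) := by positivity
      calc Real.exp (δ*j) / j ≤ Real.exp 2 / j := by
            gcongr
        _ = Real.exp 2 * (j:ℝ)⁻¹ := by ring
        _ ≤ _ := by linarith
    · have hinv : (j:ℝ)⁻¹ ≤ δ := by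
        rw [inv_le_iff_one_le_mul₀ hjpos]
        nlinarith
      have hnn : 0 ≤ Real.exp 2 * (j:ℝ)⁻¹ := by positivity
      calc Real.exp (δ*j) / j = Real.exp (δ*j) * (j:ℝ)⁻¹ := by ring
        _ ≤ Real.exp (δ*j) * δ := by
            apply mul_le_mul_of_nonneg_left hinv (Real.exp_nonneg _)
        _ = δ * Real.exp (δ*j) := by ring
        _ ≤ _ := by linarith
  have hsum : ∑ j ∈ Finset.Icc 1 J, Real.exp (δ*j) / j ≤
      Real.exp 2 * (1 + Real.log J) + Real.exp 1 * Real.exp (δ*J) := by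
    calc ∑ j ∈ Finset.Icc 1 J, Real.exp (δ*j) / j
        ≤ ∑ j ∈ Finset.Icc 1 J, (Real.exp 2 * (j:ℝ)⁻¹ + δ * Real.exp (δ*j)) :=
          Finset.sum_le_sum hper
      _ = Real.exp 2 * (∑ j ∈ Finset.Icc 1 J, ((j:ℝ))⁻¹) +
          δ * ∑ j ∈ Finset.Icc 1 J, Real.exp (δ*j) := by
          rw [Finset.sum_add_distrib, Finset.mul_sum, Finset.mul_sum]
      _ ≤ Real.exp 2 * (1 + Real.log J) + δ * (Real.exp (δ*(J+1))/δ) := by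
          refine _root_.add_le_add ?_ ?_
          · exact mul_le_mul_of_nonneg_left (harmonic_sum_le J hJ) (Real.exp_nonneg _)
          · exact mul_le_mul_of_nonneg_left (geom_exp_sum δ hδ0 J) hδ0.le
      _ ≤ Real.exp 2 * (1 + Real.log J) + Real.exp 1 * Real.exp (δ*J) := by
          apply add_le_add_right
          rw [mul_div_cancel₀ _ hδ0.ne']
          rw [← Real.exp_add]
          apply Real.exp_le_exp.mpr
          nlinarith
  exact mul_le_mul_of_nonneg_left hsum (by norm_num)

lemma prod_le_exp (σ : ℝ) (hσ : 3/4 ≤ σ) (K : ℕ) :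
    ∏ p ∈ Nat.primesBelow K, (1 - (p:ℝ)^(-σ))⁻¹ ≤
      Real.exp (3 * ∑ p ∈ Nat.primesBelow K, ((p:ℝ))^(-σ)) := by
  have hkey : ∀ p ∈ Nat.primesBelow K, ((p:ℝ))^(-σ) ≤ 2/3 := by
    intro p hp
    have hp2 : 2 ≤ p := (Nat.prime_of_mem_primesBelow hp).two_le
    have h1 : ((p:ℝ))^(-σ) ≤ (2:ℝ)^(-σ) := by
      apply Real.rpow_le_rpow_of_nonpos (by norm_num) (by exact_mod_cast hp2) (by linarith)
    have h2 : (2:ℝ)^(-σ) ≤ (2:ℝ)^(-(3/4:ℝ)) :=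
      Real.rpow_le_rpow_of_exponent_le (by norm_num) (by linarith)
    have h3 : (2:ℝ)^(-(3/4:ℝ)) ≤ 2/3 := by
      rw [Real.rpow_neg (by norm_num)]
      rw [inv_le_comm₀ (by positivity) (by norm_num)]
      have h5 : ((2:ℝ)^((3/4:ℝ)))^(4:ℕ) = 8 := by
        rw [← Real.rpow_natCast ((2:ℝ)^((3/4:ℝ))) 4, ← Real.rpow_mul (by norm_num),
          show (3/4:ℝ)*((4:ℕ):ℝ) = ((3:ℕ):ℝ) by push_cast; ring, Real.rpow_natCast]
        norm_num
      have h6 : ((2/3:ℝ))⁻¹ ^ (4:ℕ) ≤ ((2:ℝ)^((3/4:ℝ)))^(4:ℕ) := by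
        rw [h5]; norm_num
      exact le_of_pow_le_pow_left₀ (by norm_num) (Real.rpow_nonneg (by norm_num) _) h6
    linarith
  have hfac : ∀ p ∈ Nat.primesBelow K, (1 - (p:ℝ)^(-σ))⁻¹ ≤ Real.exp (3 * ((p:ℝ))^(-σ)) := by
    intro p hp
    have hp2 : 2 ≤ p := (Nat.prime_of_mem_primesBelow hp).two_le
    set t : ℝ := ((p:ℝ))^(-σ) with ht
    have ht0 : 0 ≤ t := Real.rpow_nonneg (by positivity) _
    have ht23 : t ≤ 2/3 := hkey p hp
    have h1 : (1 - t)⁻¹ ≤ 1 + 3*t := by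
      rw [inv_le_iff_one_le_mul₀ (by linarith : (0:ℝ) < 1 - t)]
      nlinarith
    have h2 : 1 + 3*t ≤ Real.exp (3*t) := by
      have := Real.add_one_le_exp (3*t)
      linarith
    linarith
  calc ∏ p ∈ Nat.primesBelow K, (1 - (p:ℝ)^(-σ))⁻¹
      ≤ ∏ p ∈ Nat.primesBelow K, Real.exp (3 * ((p:ℝ))^(-σ)) := by
        apply Finset.prod_le_prod _ hfac
        intro p hp
        have := hkey p hp
        have h0 : (0:ℝ) ≤ ((p:ℝ))^(-σ) := Real.rpow_nonneg (by positivity) _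
        rw [inv_nonneg]
        linarith
    _ = Real.exp (3 * ∑ p ∈ Nat.primesBelow K, ((p:ℝ))^(-σ)) := by
        rw [← Real.exp_sum, Finset.mul_sum]

lemma inv_sq_sum (M : ℕ) (hM : 1 ≤ M) :
    ∀ N : ℕ, ∑ m ∈ Finset.Ioc M N, (((m:ℝ))^2)⁻¹ ≤ ((M:ℝ))⁻¹ := by
  have key : ∀ N : ℕ, M ≤ N → ∑ m ∈ Finset.Ioc M N, (((m:ℝ))^2)⁻¹ ≤ ((M:ℝ))⁻¹ - ((N:ℝ))⁻¹ := by
    intro N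
    induction N with
    | zero => intro h; interval_cases M <;> simp
    | succ N ihN =>
        intro h
        rcases Nat.lt_or_ge M (N+1) with h2 | h2
        · have hMN : M ≤ N := by omega
          rw [Finset.sum_Ioc_succ_top hMN]
          have := ihN hMN
          have hN1 : (1:ℝ) ≤ (N:ℝ) := by exact_mod_cast hM.trans hMN
          have hstep : (((N:ℝ)+1)^2)⁻¹ ≤ (N:ℝ)⁻¹ - ((N:ℝ)+1)⁻¹ := by
            rw [show (N:ℝ)⁻¹ - ((N:ℝ)+1)⁻¹ = ((N:ℝ)*((N:ℝ)+1))⁻¹ by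
              field_simp; ring]
            apply inv_anti₀ (by nlinarith) (by nlinarith)
          push_cast
          push_cast at this
          linarith
        · have : N + 1 = M := by omega
          subst this
          simp
  intro N
  rcases Nat.lt_or_ge N M with h | h
  · rw [Finset.Ioc_eq_empty (by omega)]
    simp
  · have := key N h
    have hN0 : (0:ℝ) < N := by exact_mod_cast hM.trans h
    have : ((N:ℝ))⁻¹ ≥ 0 := by positivity
    linarith [key N h]

lemma squarefull_card (N M : ℕ) (hM : 1 ≤ M) (S : Finset ℕ)
    (hS : ∀ n ∈ S, n ∈ Finset.Icc 1 N ∧ ∃ p : ℕ, M < p ∧ p^2 ∣ n) :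
    (S.card : ℝ) ≤ (N:ℝ) / M := by
  have hsub : S ⊆ (Finset.Ioc M N).biUnion
      (fun p => (Finset.Icc 1 N).filter (fun n => p^2 ∣ n)) := by
    intro n hn
    obtain ⟨hn1, p, hp1, hp2⟩ := hS n hn
    rw [Finset.mem_Icc] at hn1
    rw [Finset.mem_biUnion]
    refine ⟨p, ?_, ?_⟩
    · rw [Finset.mem_Ioc]
      refine ⟨hp1, ?_⟩
      have hpn : p ≤ n := by
        calc p ≤ p^2 := Nat.le_self_pow (by norm_num) p
          _ ≤ n := Nat.le_of_dvd (by omega) hp2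
      omega
    · rw [Finset.mem_filter, Finset.mem_Icc]; exact ⟨⟨hn1.1, hn1.2⟩, hp2⟩
  have hcard : S.card ≤ ∑ p ∈ Finset.Ioc M N, N / (p^2) := by
    calc S.card ≤ ((Finset.Ioc M N).biUnion
          (fun p => (Finset.Icc 1 N).filter (fun n => p^2 ∣ n))).card :=
          Finset.card_le_card hsub
      _ ≤ ∑ p ∈ Finset.Ioc M N, ((Finset.Icc 1 N).filter (fun n => p^2 ∣ n)).card :=
          Finset.card_biUnion_le
      _ = ∑ p ∈ Finset.Ioc M N, N / (p^2) := by
          apply Finset.sum_congr rfl; intro p _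
          have heq : (Finset.Icc 1 N).filter (fun n => p^2 ∣ n) =
              (Finset.range N.succ).filter (fun k => k ≠ 0 ∧ p^2 ∣ k) := by
            ext k
            simp only [Finset.mem_filter, Finset.mem_Icc, Finset.mem_range, Nat.lt_succ_iff]
            constructor
            · rintro ⟨⟨h1,h2⟩,h3⟩; exact ⟨h2, by omega, h3⟩
            · rintro ⟨h1,h2,h3⟩; exact ⟨⟨by omega, h1⟩, h3⟩
          rw [heq, Nat.card_multiples']
  calc (S.card : ℝ) ≤ ∑ p ∈ Finset.Ioc M N, ((N / (p^2) : ℕ) : ℝ) := by exact_mod_cast hcard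
    _ ≤ ∑ p ∈ Finset.Ioc M N, (N:ℝ) * (((p:ℝ))^2)⁻¹ := by
        apply Finset.sum_le_sum; intro p _
        calc ((N / (p^2) : ℕ) : ℝ) ≤ (N:ℝ)/((p:ℝ)^2) := by
              have h := Nat.cast_div_le (α := ℝ) (m := N) (n := p^2)
              push_cast at h ⊢
              exact h
          _ = (N:ℝ) * (((p:ℝ))^2)⁻¹ := by ring
    _ = (N:ℝ) * ∑ p ∈ Finset.Ioc M N, (((p:ℝ))^2)⁻¹ := by rw [Finset.mul_sum]
    _ ≤ (N:ℝ) * ((M:ℝ))⁻¹ :=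
        mul_le_mul_of_nonneg_left (inv_sq_sum M hM N) (by positivity)
    _ = (N:ℝ)/M := by ring

/-- Largest prime factor of `n` (0 if `n` has no prime factors). -/
def maxPrimeFac (n : ℕ) : ℕ := n.primeFactors.sup id



set_option maxHeartbeats 2000000 in
theorem stmt_0 :
    ∃ C > (0:ℝ), ∃ x₀ : ℝ, ∀ x : ℝ, x₀ ≤ x →
      (((Finset.Icc 1 ⌊x⌋₊).filter (fun n : ℕ =>
        (maxPrimeFac n : ℝ) ≤ x ^ (1 / Real.log (Real.log x)) ∨
          (maxPrimeFac n) ^ 2 ∣ n)).card : ℝ) ≤ C * x / (Real.log x) ^ 2 := by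
  set C₂ : ℝ := 1 + 8*Real.exp 2 + 4*Real.exp 1*Real.exp 92 with hC₂
  refine ⟨Real.exp (3*C₂) + 1, by positivity, Real.exp (6400^2), fun x hx => ?_⟩
  have hx0 : (0:ℝ) < x := lt_of_lt_of_le (Real.exp_pos _) hx
  set t := Real.log x with hti
  have ht : (6400^2 : ℝ) ≤ t := by
    rw [hti, ← Real.log_exp ((6400:ℝ)^2)]
    exact Real.log_le_log (Real.exp_pos _) hx
  have ht' : (20736:ℝ) ≤ t := by
    have h := ht; norm_num at h; linarith
  clear hx ht
  have ht2 : (2:ℝ) ≤ t := by linarith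
  have ht0 : (0:ℝ) < t := by linarith
  have ht4 : (4:ℝ) ≤ t^2 := by
    have h := mul_le_mul ht2 ht2 (by norm_num) ht0.le
    calc (4:ℝ) = 2*2 := by norm_num
      _ ≤ t*t := h
      _ = t^2 := (sq t).symm
  set u := Real.log t with hui
  have hu1 : 1 ≤ u := by
    rw [hui, ← Real.log_exp 1]
    apply Real.log_le_log (Real.exp_pos 1)
    have := Real.exp_one_lt_d9
    linarith
  have hu0 : (0:ℝ) < u := by linarith
  -- quartic-root bounds
  set s := Real.sqrt (Real.sqrt t) with hsi
  have hsqt0 : (0:ℝ) ≤ Real.sqrt t := Real.sqrt_nonneg t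
  have hs0 : (0:ℝ) ≤ s := Real.sqrt_nonneg _
  have hst : s^4 = t := by
    rw [hsi, show (4:ℕ) = 2*2 from rfl, pow_mul, Real.sq_sqrt hsqt0, Real.sq_sqrt ht0.le]
  have hs12 : (12:ℝ) ≤ s := by
    rw [hsi, show (12:ℝ) = Real.sqrt (Real.sqrt (12^4)) by
      rw [show ((12:ℝ)^4) = ((12:ℝ)^2)^2 by ring, Real.sqrt_sq (by positivity),
        Real.sqrt_sq (by norm_num)]]
    apply Real.sqrt_le_sqrt
    apply Real.sqrt_le_sqrt
    norm_num
    linarith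
  clear_value s
  have hspos : (0:ℝ) < s := by linarith
  have hlogs : Real.log s ≤ s - 1 := Real.log_le_sub_one_of_pos hspos
  have hu4 : u = 4 * Real.log s := by
    rw [hui, ← hst, Real.log_pow]; push_cast; ring
  have hus : u ≤ 4*s := by rw [hu4]; linarith
  have hs3 : (1728:ℝ) ≤ s^3 := by
    have h := pow_le_pow_left₀ (by norm_num : (0:ℝ) ≤ 12) hs12 3
    norm_num at h
    linarith
  have hs4' : 1728*s ≤ t := by
    have h4 : 1728*s ≤ s^3*s := mul_le_mul_of_nonneg_right hs3 hs0
    have h5 : s^3*s = t := by rw [← hst]; ring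
    linarith
  have h368 : 368*u ≤ t := by linarith
  have hs2 : (144:ℝ) ≤ s^2 := by
    have h := mul_le_mul hs12 hs12 (by norm_num) hs0
    calc (144:ℝ) = 12*12 := by norm_num
      _ ≤ s*s := h
      _ = s^2 := (sq s).symm
  have h3u2 : 3*u^2 ≤ t := by
    have h6 : u^2 ≤ 16*s^2 := by
      have h7 : u*u ≤ (4*s)*(4*s) := mul_le_mul hus hus hu0.le (by positivity)
      calc u^2 = u*u := sq u
        _ ≤ (4*s)*(4*s) := h7
        _ = 16*s^2 := by ring
    have h8 : 48*s^2 ≤ s^2*s^2 := by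
      have := mul_le_mul_of_nonneg_right (le_trans (by norm_num) hs2 : (48:ℝ) ≤ s^2) (sq_nonneg s)
      linarith
    have h9 : s^2*s^2 = t := by rw [← hst]; ring
    linarith
  -- y
  set y := x ^ (1/u) with hyi
  have hy0 : (0:ℝ) < y := Real.rpow_pos_of_pos hx0 _
  have hylog : Real.log y = t/u := by
    rw [hyi, Real.log_rpow hx0, ← hti]; ring
  clear_value y
  have hyexp : y = Real.exp (t/u) := by rw [← hylog, Real.exp_log hy0]
  have hyt2 : t^2 + 1 ≤ y := by
    rw [hyexp]
    have h1 : Real.log (t^2+1) ≤ 3*u := by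
      calc Real.log (t^2+1) ≤ Real.log (t^3) :=
            Real.log_le_log (by positivity) (by
              have ha : t^3 = t*t^2 := by ring
              have hb : 2*t^2 ≤ t*t^2 := mul_le_mul_of_nonneg_right ht2 (sq_nonneg t)
              linarith)
        _ = 3 * u := by rw [Real.log_pow, hui]; push_cast; ring
    have h2 : Real.log (t^2+1) ≤ t/u := by
      rw [le_div_iff₀ hu0]
      have := mul_le_mul_of_nonneg_right h1 hu0.le
      have h3 : 3*u*u = 3*u^2 := by ring
      linarith
    calc t^2+1 = Real.exp (Real.log (t^2+1)) := (Real.exp_log (by positivity)).symm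
      _ ≤ Real.exp (t/u) := Real.exp_le_exp.mpr h2
  set N := ⌊x⌋₊ with hNi
  have hNx : (N:ℝ) ≤ x := Nat.floor_le hx0.le
  clear_value N
  set M := ⌊y⌋₊ with hMi
  have hM2 : 2 ≤ M := by
    apply Nat.le_floor
    push_cast
    linarith
  have hMy : (M:ℝ) ≤ y := Nat.floor_le hy0.le
  have hMt2 : t^2 ≤ (M:ℝ) := by
    have h := Nat.lt_floor_add_one y
    rw [← hMi] at h
    linarith
  clear_value M
  have hM0 : (0:ℝ) < M := lt_of_lt_of_le (by positivity) hMt2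
  set K := M + 1 with hKi
  set J := Nat.log 2 M with hJi
  have hJ2 : 2^J ≤ M := Nat.pow_log_le_self 2 (by omega)
  have hJ2' : M < 2^(J+1) := Nat.lt_pow_succ_log_self (by norm_num) M
  clear_value J
  have hJ1 : 1 ≤ J := by
    rcases Nat.eq_zero_or_pos J with h | h
    · rw [h] at hJ2'; omega
    · exact h
  have hJ1' : (1:ℝ) ≤ (J:ℝ) := by exact_mod_cast hJ1
  have hKJ : K ≤ 2^(J+1)+1 := by omega
  -- σ, δ
  clear_value t u
  set σ := 1 - 92*(u/t) with hσi
  have hut14 : 92*(u/t) ≤ 1/4 := by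
    rw [mul_div_assoc', div_le_iff₀ ht0]
    linarith
  have hut0 : 0 ≤ u/t := by positivity
  have hσ34 : 3/4 ≤ σ := by rw [hσi]; linarith
  have hσ1 : σ ≤ 1 := by rw [hσi]; linarith
  have hσ0 : 0 < σ := lt_of_lt_of_le (by norm_num) hσ34
  have h1σ : 1 - σ = 92*(u/t) := by rw [hσi]; ring
  have hlog2pos : (0:ℝ) < Real.log 2 := Real.log_pos (by norm_num)
  have hlog2lt : Real.log 2 < 1 := by
    have := Real.log_two_lt_d9; linarith
  set δ := (1-σ)*Real.log 2 with hδi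
  have hδ0 : 0 < δ := by
    rw [hδi, h1σ]
    exact mul_pos (by positivity) hlog2pos
  have hδ1 : δ ≤ 1 := by
    rw [hδi, h1σ]
    exact mul_le_one₀ (le_trans hut14 (by norm_num)) hlog2pos.le hlog2lt.le
  -- J bounds
  have hJlog : (J:ℝ) * Real.log 2 ≤ t/u := by
    have h2J : ((2:ℝ))^J ≤ y := by
      calc ((2:ℝ))^J = ((2^J : ℕ) : ℝ) := by push_cast; ring
        _ ≤ (M:ℝ) := by exact_mod_cast hJ2
        _ ≤ y := hMy
    calc (J:ℝ)*Real.log 2 = Real.log ((2:ℝ)^J) := by rw [Real.log_pow]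
      _ ≤ Real.log y := Real.log_le_log (by positivity) h2J
      _ = t/u := hylog
  have hδJ : δ*(J:ℝ) ≤ 92 := by
    have heq : δ*(J:ℝ) = 92*(u/t)*((J:ℝ)*Real.log 2) := by rw [hδi, h1σ]; ring
    rw [heq]
    have h2 : 92*(u/t)*((J:ℝ)*Real.log 2) ≤ 92*(u/t)*(t/u) := by
      apply mul_le_mul_of_nonneg_left hJlog (by positivity)
    have h3 : 92*(u/t)*(t/u) = 92 := by field_simp
    linarith
  have hJle : (J:ℝ) ≤ 2*t := by
    have h1 : t/u ≤ t := by
      rw [div_le_iff₀ hu0]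
      have h2 := mul_le_mul_of_nonneg_left hu1 ht0.le
      linarith
    have h2 : (J:ℝ)*(0.6931471803) ≤ t := by
      have h3 := mul_le_mul_of_nonneg_left Real.log_two_gt_d9.le (Nat.cast_nonneg (α := ℝ) J)
      linarith
    have h4 := Nat.cast_nonneg (α := ℝ) J
    linarith
  have hlogJ : Real.log J ≤ 1 + u := by
    calc Real.log J ≤ Real.log (2*t) := Real.log_le_log (by linarith) hJle
      _ = Real.log 2 + Real.log t := Real.log_mul (by norm_num) ht0.ne'
      _ ≤ 1 + u := by rw [← hui]; linarith
  -- prime sum bound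
  have hprimesum : ∑ p ∈ Nat.primesBelow K, ((p:ℝ))^(-σ) ≤ 4*Real.exp 2 * u + C₂ := by
    have h1 : ∑ p ∈ Nat.primesBelow K, ((p:ℝ))^(-σ) ≤
        ∑ p ∈ Nat.primesBelow (2^(J+1)+1), ((p:ℝ))^(-σ) := by
      apply Finset.sum_le_sum_of_subset_of_nonneg
      · exact Finset.filter_subset_filter _ (Finset.range_subset_range.mpr hKJ)
      · intro p _ _
        positivity
    have h2 := primesum_dyadic σ hσ0.le J
    have h3 := dyadic_sum_bound σ δ J hJ1 hσ0.le hδi hδ0 hδ1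
    have e1 : Real.exp (δ*(J:ℝ)) ≤ Real.exp 92 := Real.exp_le_exp.mpr hδJ
    have e3 : Real.exp 2 * Real.log J ≤ Real.exp 2 * (1+u) :=
      mul_le_mul_of_nonneg_left hlogJ (Real.exp_nonneg 2)
    have e4 : Real.exp 1 * Real.exp (δ*(J:ℝ)) ≤ Real.exp 1 * Real.exp 92 :=
      mul_le_mul_of_nonneg_left e1 (Real.exp_nonneg 1)
    rw [hC₂]
    linarith
  -- Rankin
  have hexp2 : Real.exp 2 ≤ 7.5 := by
    have h := Real.exp_one_lt_d9
    have h2 : Real.exp 2 = Real.exp 1 * Real.exp 1 := by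
      rw [← Real.exp_add]; norm_num
    have h3 : Real.exp 1 * Real.exp 1 ≤ 2.7182818286*2.7182818286 :=
      mul_le_mul h.le h.le (Real.exp_pos 1).le (by norm_num)
    rw [h2]
    norm_num at h3 ⊢
    linarith
  have hcard1 : ((Nat.smoothNumbersUpTo N K).card : ℝ) ≤
      Real.exp (3*C₂) * (x / t^2) := by
    have hA : ∀ n ∈ Nat.smoothNumbersUpTo N K, (1:ℝ) ≤ (x/(n:ℝ))^σ := by
      intro n hn
      obtain ⟨hnN, hsm⟩ := Nat.mem_smoothNumbersUpTo.mp hn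
      have hn0 : n ≠ 0 := Nat.ne_zero_of_mem_smoothNumbers hsm
      have hn0' : (0:ℝ) < n := by exact_mod_cast Nat.pos_of_ne_zero hn0
      have h1 : (1:ℝ) ≤ x/(n:ℝ) := by
        rw [le_div_iff₀ hn0']
        have : (n:ℝ) ≤ N := by exact_mod_cast hnN
        linarith
      calc (1:ℝ) = 1^σ := (Real.one_rpow σ).symm
        _ ≤ (x/(n:ℝ))^σ := Real.rpow_le_rpow (by norm_num) h1 hσ0.le
    have step1 : ((Nat.smoothNumbersUpTo N K).card : ℝ) ≤
        ∑ n ∈ Nat.smoothNumbersUpTo N K, (x/(n:ℝ))^σ := by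
      rw [Finset.card_eq_sum_ones]
      push_cast
      exact Finset.sum_le_sum hA
    have step2 : ∑ n ∈ Nat.smoothNumbersUpTo N K, (x/(n:ℝ))^σ =
        x^σ * ∑ n ∈ Nat.smoothNumbersUpTo N K, ((n:ℝ))^(-σ) := by
      rw [Finset.mul_sum]
      apply Finset.sum_congr rfl
      intro n hn
      obtain ⟨_, hsm⟩ := Nat.mem_smoothNumbersUpTo.mp hn
      have hn0 : n ≠ 0 := Nat.ne_zero_of_mem_smoothNumbers hsm
      have hn0' : (0:ℝ) < n := by exact_mod_cast Nat.pos_of_ne_zero hn0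
      rw [Real.div_rpow hx0.le hn0'.le, Real.rpow_neg hn0'.le, div_eq_mul_inv]
    have step3 : x^σ = Real.exp (t - 92*u) := by
      rw [Real.rpow_def_of_pos hx0, ← hti, hσi]
      congr 1
      field_simp
      try ring
    have step4 : x^σ * ∑ n ∈ Nat.smoothNumbersUpTo N K, ((n:ℝ))^(-σ) ≤
        x^σ * Real.exp (3*(4*Real.exp 2 * u + C₂)) := by
      apply mul_le_mul_of_nonneg_left _ (Real.rpow_nonneg hx0.le σ)
      calc ∑ n ∈ Nat.smoothNumbersUpTo N K, ((n:ℝ))^(-σ)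
          ≤ ∏ p ∈ Nat.primesBelow K, (1 - (p:ℝ)^(-σ))⁻¹ := euler_sum_le σ hσ0 N K
        _ ≤ Real.exp (3 * ∑ p ∈ Nat.primesBelow K, ((p:ℝ))^(-σ)) := prod_le_exp σ hσ34 K
        _ ≤ Real.exp (3*(4*Real.exp 2 * u + C₂)) := by
            apply Real.exp_le_exp.mpr
            linarith
    have step5 : x^σ * Real.exp (3*(4*Real.exp 2 * u + C₂)) ≤
        Real.exp (3*C₂) * (x / t^2) := by
      rw [step3, ← Real.exp_add]
      have hext : Real.exp t = x := by rw [hti]; exact Real.exp_log hx0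
      have hexu : Real.exp u = t := by rw [hui]; exact Real.exp_log ht0
      have hxt : x / t^2 = Real.exp (t - 2*u) := by
        rw [Real.exp_sub, hext, show (2:ℝ)*u = u + u by ring, Real.exp_add, hexu]
        ring
      rw [hxt, ← Real.exp_add]
      apply Real.exp_le_exp.mpr
      have h5 : Real.exp 2 * u ≤ 7.5*u := mul_le_mul_of_nonneg_right hexp2 hu0.le
      linarith
    calc ((Nat.smoothNumbersUpTo N K).card : ℝ)
        ≤ ∑ n ∈ Nat.smoothNumbersUpTo N K, (x/(n:ℝ))^σ := step1
      _ = x^σ * ∑ n ∈ Nat.smoothNumbersUpTo N K, ((n:ℝ))^(-σ) := step2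
      _ ≤ x^σ * Real.exp (3*(4*Real.exp 2 * u + C₂)) := step4
      _ ≤ Real.exp (3*C₂) * (x / t^2) := step5
  -- split the set
  set F1 := (Finset.Icc 1 N).filter (fun n : ℕ => (maxPrimeFac n : ℝ) ≤ y) with hF1
  set F2 := (Finset.Icc 1 N).filter
    (fun n : ℕ => ¬((maxPrimeFac n : ℝ) ≤ y) ∧ (maxPrimeFac n)^2 ∣ n) with hF2
  have hsplit : (Finset.Icc 1 N).filter (fun n : ℕ =>
      (maxPrimeFac n : ℝ) ≤ y ∨ (maxPrimeFac n) ^ 2 ∣ n) ⊆ F1 ∪ F2 := by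
    intro n hn
    rw [Finset.mem_filter] at hn
    rw [Finset.mem_union, hF1, hF2, Finset.mem_filter, Finset.mem_filter]
    by_cases hP : (maxPrimeFac n : ℝ) ≤ y
    · exact Or.inl ⟨hn.1, hP⟩
    · rcases hn.2 with h | h
      · exact absurd h hP
      · exact Or.inr ⟨hn.1, hP, h⟩
  -- F1 via smooth numbers
  have hsub1 : F1 ⊆ Nat.smoothNumbersUpTo N K := by
    intro n hn
    rw [hF1, Finset.mem_filter, Finset.mem_Icc] at hn
    obtain ⟨⟨hn1, hnN⟩, hny⟩ := hn
    rw [Nat.mem_smoothNumbersUpTo]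
    refine ⟨hnN, ?_⟩
    rw [Nat.mem_smoothNumbers']
    intro p hp hpd
    have hpf : p ∈ n.primeFactors := Nat.mem_primeFactors.mpr ⟨hp, hpd, by omega⟩
    have hple : p ≤ maxPrimeFac n := Finset.le_sup (f := id) hpf
    have hpy : (p:ℝ) ≤ y := le_trans (by exact_mod_cast hple) hny
    have hpM : p ≤ M := by rw [hMi]; exact Nat.le_floor hpy
    omega
  have hF1card : (F1.card : ℝ) ≤ Real.exp (3*C₂) * (x / t^2) := by
    calc (F1.card : ℝ) ≤ ((Nat.smoothNumbersUpTo N K).card : ℝ) := by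
          exact_mod_cast Finset.card_le_card hsub1
      _ ≤ _ := hcard1
  -- F2 via squarefull
  have hF2card : (F2.card : ℝ) ≤ x / t^2 := by
    have h1 : (F2.card : ℝ) ≤ (N:ℝ) / M := by
      apply squarefull_card N M (by omega) F2
      intro n hn
      rw [hF2, Finset.mem_filter] at hn
      obtain ⟨hn1, hny, hsq⟩ := hn
      refine ⟨hn1, maxPrimeFac n, ?_, hsq⟩
      have : (M:ℝ) < (maxPrimeFac n : ℝ) := lt_of_le_of_lt hMy (lt_of_not_ge hny)
      exact_mod_cast this
    calc (F2.card : ℝ) ≤ (N:ℝ)/M := h1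
      _ ≤ x / t^2 := by
          apply div_le_div₀ hx0.le hNx (by positivity) hMt2
  -- finish
  have hcards : (((Finset.Icc 1 N).filter (fun n : ℕ =>
      (maxPrimeFac n : ℝ) ≤ y ∨ (maxPrimeFac n) ^ 2 ∣ n)).card : ℝ) ≤
      (F1.card : ℝ) + (F2.card : ℝ) := by
    have := (Finset.card_le_card hsplit).trans (Finset.card_union_le F1 F2)
    exact_mod_cast this
  calc (((Finset.Icc 1 N).filter (fun n : ℕ =>
      (maxPrimeFac n : ℝ) ≤ y ∨ (maxPrimeFac n) ^ 2 ∣ n)).card : ℝ)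
      ≤ (F1.card : ℝ) + (F2.card : ℝ) := hcards
    _ ≤ Real.exp (3*C₂) * (x / t^2) + x / t^2 := add_le_add hF1card hF2card
    _ = (Real.exp (3*C₂) + 1) * x / t^2 := by ring
end

section
/- For x ≥ y ≥ 2 with (log x)^2 ≤ y ≤ x and u := (log x)/(log y), the number Ψ(x,y) of y-smooth integers n ≤ x satisfies Ψ(x,y) ≤ x/u^{u+o(u)} as u → ∞; in particular, for any ε > 0 there exists U such that whenever u ≥ U one has Ψ(x,y) ≤ x · u^{-(1-ε)u}. -/
set_option maxHeartbeats 1000000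

namespace SmoothPf

open Finset Real

open Classical in
/-- The smooth-number counting function `Ψ(t, y)`. -/
noncomputable def Psi (y t : ℝ) : ℕ :=
  ((Finset.Icc 1 ⌊t⌋₊).filter (fun n : ℕ =>
      ∀ p : ℕ, p.Prime → p ∣ n → (p : ℝ) ≤ y)).card

open Classical in
noncomputable def S (y t : ℝ) : Finset ℕ :=
  (Finset.Icc 1 ⌊t⌋₊).filter (fun n : ℕ =>
      ∀ p : ℕ, p.Prime → p ∣ n → (p : ℝ) ≤ y)

lemma Psi_eq_card (y t : ℝ) : Psi y t = (S y t).card := rfl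

/-- primes up to `y`. -/
noncomputable def P (y : ℝ) : Finset ℕ := (Finset.range (⌊y⌋₊ + 1)).filter Nat.Prime

lemma mem_S {y t : ℝ} {n : ℕ} :
    n ∈ S y t ↔ (1 ≤ n ∧ n ≤ ⌊t⌋₊) ∧ ∀ p : ℕ, p.Prime → p ∣ n → (p : ℝ) ≤ y := by
  simp [S, Finset.mem_filter, Finset.mem_Icc]

lemma Psi_le_floor (y t : ℝ) : Psi y t ≤ ⌊t⌋₊ := by
  classical
  calc Psi y t ≤ (Finset.Icc 1 ⌊t⌋₊).card := Finset.card_filter_le _ _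
  _ = ⌊t⌋₊ := by simp [Nat.card_Icc]

lemma Psi_le_self {y t : ℝ} (ht : 0 ≤ t) : (Psi y t : ℝ) ≤ t := by
  have h1 : (Psi y t : ℝ) ≤ (⌊t⌋₊ : ℝ) := by exact_mod_cast Psi_le_floor y t
  exact h1.trans (Nat.floor_le ht)

lemma Psi_eq_zero {y t : ℝ} (ht : t < 1) : Psi y t = 0 := by
  have h : ⌊t⌋₊ = 0 := Nat.floor_eq_zero.mpr ht
  classical
  simp [Psi, h]

lemma mem_P {y : ℝ} {p : ℕ} (hy : 0 ≤ y) (hp : p ∈ P y) : p.Prime ∧ (p : ℝ) ≤ y := by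
  rcases Finset.mem_filter.mp hp with ⟨hr, hpp⟩
  have h1 : p ≤ ⌊y⌋₊ := Nat.lt_succ_iff.mp (Finset.mem_range.mp hr)
  refine ⟨hpp, ?_⟩
  calc (p : ℝ) ≤ (⌊y⌋₊ : ℝ) := by exact_mod_cast h1
  _ ≤ y := Nat.floor_le hy

/-- Mertens-type upper bound, fully elementary. -/
lemma mertens {y : ℝ} (hy : 2 ≤ y) :
    ∑ p ∈ P y, Real.log p / p ≤ Real.log y + 2 := by
  classical
  set M := ⌊y⌋₊ with hMdef
  have hM2 : 2 ≤ M := Nat.le_floor (by exact_mod_cast hy)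
  have hM0 : 0 < M := by omega
  have hMy : (M : ℝ) ≤ y := Nat.floor_le (by linarith)
  have hmem : ∀ p ∈ P y, p.Prime ∧ p ≤ M := by
    intro p hp
    rcases Finset.mem_filter.mp hp with ⟨hr, hpp⟩
    exact ⟨hpp, Nat.lt_succ_iff.mp (Finset.mem_range.mp hr)⟩
  -- Step 1 : ∑ (M/p) log p ≤ log M!
  have step1 : ∑ p ∈ P y, ((M / p : ℕ) : ℝ) * Real.log p ≤ Real.log (M.factorial : ℝ) := by
    rw [Real.log_nat_eq_sum_factorization, Finsupp.sum]
    have hsub : P y ⊆ (M.factorial).factorization.support := by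
      intro p hp
      rcases hmem p hp with ⟨hpp, hpM⟩
      rw [Nat.support_factorization]
      exact Nat.mem_primeFactors.mpr
        ⟨hpp, (Nat.Prime.dvd_factorial hpp).mpr hpM, Nat.factorial_ne_zero M⟩
    refine le_trans (Finset.sum_le_sum ?_) (Finset.sum_le_sum_of_subset_of_nonneg hsub ?_)
    · intro p hp
      rcases hmem p hp with ⟨hpp, hpM⟩
      have hkey : M / p ≤ (M.factorial).factorization p := by
        rw [← Nat.Prime.pow_dvd_iff_le_factorization hpp (Nat.factorial_ne_zero M)]
        rw [Nat.Prime.pow_dvd_factorial_iff hpp (Nat.lt_succ_of_le (Nat.log_le_self p M))]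
        have h1 : (1 : ℕ) ∈ Finset.Ico 1 (M + 1) := by
          simp [Finset.mem_Ico]; omega
        calc M / p = M / p ^ 1 := by rw [pow_one]
        _ ≤ ∑ i ∈ Finset.Ico 1 (M + 1), M / p ^ i :=
            Finset.single_le_sum (f := fun i => M / p ^ i) (fun i _ => Nat.zero_le _) h1
      exact mul_le_mul_of_nonneg_right (by exact_mod_cast hkey) (Real.log_natCast_nonneg p)
    · intro p _ _
      exact mul_nonneg (by positivity) (Real.log_natCast_nonneg p)
  -- Step 2 : log M! ≤ M log M
  have step2 : Real.log (M.factorial : ℝ) ≤ (M : ℝ) * Real.log M := by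
    have h1 : ((M.factorial : ℕ) : ℝ) ≤ ((M : ℝ)) ^ M := by exact_mod_cast Nat.factorial_le_pow M
    calc Real.log (M.factorial : ℝ) ≤ Real.log ((M : ℝ) ^ M) :=
          Real.log_le_log (by exact_mod_cast Nat.factorial_pos M) h1
    _ = (M : ℝ) * Real.log M := by rw [Real.log_pow]
  -- Step 3 : ∑ log p ≤ M log 4
  have step3 : ∑ p ∈ P y, Real.log p ≤ (M : ℝ) * Real.log 4 := by
    have h1 : Real.log ((primorial M : ℕ) : ℝ) = ∑ p ∈ P y, Real.log p := by
      have : ((primorial M : ℕ) : ℝ) = ∏ p ∈ P y, (p : ℝ) := by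
        rw [primorial]; push_cast; rfl
      rw [this, Real.log_prod]
      intro p hp
      have := (hmem p hp).1.pos
      positivity
    have h2 : ((primorial M : ℕ) : ℝ) ≤ (4 : ℝ) ^ M := by
      exact_mod_cast primorial_le_4_pow M
    have h3 : Real.log ((primorial M : ℕ) : ℝ) ≤ Real.log ((4 : ℝ) ^ M) :=
      Real.log_le_log (by exact_mod_cast primorial_pos M) h2
    rw [h1, Real.log_pow] at h3
    exact h3
  -- combine
  have key : ∀ p ∈ P y, (M : ℝ) * (Real.log p / p) ≤
      ((M / p : ℕ) : ℝ) * Real.log p + Real.log p := by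
    intro p hp
    rcases hmem p hp with ⟨hpp, hpM⟩
    have hp0 : (0 : ℝ) < p := by exact_mod_cast hpp.pos
    have hdiv : (M : ℝ) / p ≤ ((M / p : ℕ) : ℝ) + 1 := by
      rw [div_le_iff₀ hp0]
      have h1 := Nat.div_add_mod M p
      have h2 : M % p < p := Nat.mod_lt M hpp.pos
      have h1' : (M : ℝ) = (p : ℝ) * ((M / p : ℕ) : ℝ) + ((M % p : ℕ) : ℝ) := by
        exact_mod_cast congrArg (Nat.cast : ℕ → ℝ) h1.symm
      have h2' : ((M % p : ℕ) : ℝ) < (p : ℝ) := by exact_mod_cast h2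
      nlinarith
    have hlp : 0 ≤ Real.log p := Real.log_natCast_nonneg p
    have : (M : ℝ) * (Real.log p / p) = ((M : ℝ) / p) * Real.log p := by ring
    rw [this]
    nlinarith [mul_le_mul_of_nonneg_right hdiv hlp]
  have tot : (M : ℝ) * ∑ p ∈ P y, Real.log p / p ≤
      (M : ℝ) * Real.log M + (M : ℝ) * Real.log 4 := by
    rw [Finset.mul_sum]
    calc ∑ p ∈ P y, (M : ℝ) * (Real.log p / p)
        ≤ ∑ p ∈ P y, (((M / p : ℕ) : ℝ) * Real.log p + Real.log p) :=
          Finset.sum_le_sum key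
    _ = (∑ p ∈ P y, ((M / p : ℕ) : ℝ) * Real.log p) + ∑ p ∈ P y, Real.log p := by
          rw [Finset.sum_add_distrib]
    _ ≤ (M : ℝ) * Real.log M + (M : ℝ) * Real.log 4 := by
          have := step1.trans step2
          linarith [step3, this]
  have hMpos : (0 : ℝ) < (M : ℝ) := by exact_mod_cast hM0
  have h4 : ∑ p ∈ P y, Real.log p / p ≤ Real.log M + Real.log 4 := by
    nlinarith [tot, hMpos]
  have h5 : Real.log (M : ℝ) ≤ Real.log y := Real.log_le_log hMpos hMy
  have h6 : Real.log 4 ≤ 2 := by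
    have h7 : (4 : ℝ) = 2 ^ 2 := by norm_num
    rw [h7, Real.log_pow]
    have := Real.log_two_lt_d9
    push_cast
    nlinarith
  linarith

/-- Counting via prime factorizations: the Chebyshev–Buchstab style identity (as inequality). -/
lemma sum_log_le {y s : ℝ} (hy : 2 ≤ y) (hs : 1 ≤ s) :
    ∑ n ∈ S y s, Real.log n ≤
      ∑ p ∈ P y, ∑ k ∈ Finset.Icc 1 ⌊s⌋₊,
        Real.log p * (Psi y (s / (p : ℝ) ^ k) : ℝ) := by
  classical
  set K := ⌊s⌋₊ with hK
  have hident : ∀ n ∈ S y s, Real.log n =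
      ∑ p ∈ P y, ∑ k ∈ Finset.Icc 1 K, (if p ^ k ∣ n then Real.log p else 0) := by
    intro n hn
    rcases mem_S.mp hn with ⟨⟨h1, h2⟩, h3⟩
    have hn0 : n ≠ 0 := by omega
    have hinner : ∀ p ∈ P y, ∑ k ∈ Finset.Icc 1 K, (if p ^ k ∣ n then Real.log p else 0)
        = (n.factorization p : ℝ) * Real.log p := by
      intro p hp
      rcases Finset.mem_filter.mp hp with ⟨_, hpp⟩
      rw [← Finset.sum_filter]
      have hfilt : (Finset.Icc 1 K).filter (fun k => p ^ k ∣ n)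
          = Finset.Icc 1 (n.factorization p) := by
        ext k
        simp only [Finset.mem_filter, Finset.mem_Icc]
        constructor
        · rintro ⟨⟨hk1, _⟩, hdvd⟩
          exact ⟨hk1, (Nat.Prime.pow_dvd_iff_le_factorization hpp hn0).mp hdvd⟩
        · rintro ⟨hk1, hkf⟩
          have hlt : n.factorization p < n := Nat.factorization_lt p hn0
          refine ⟨⟨hk1, by omega⟩, (Nat.Prime.pow_dvd_iff_le_factorization hpp hn0).mpr hkf⟩
      rw [hfilt, Finset.sum_const, Nat.card_Icc, nsmul_eq_mul]
      norm_num
    rw [Finset.sum_congr rfl hinner]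
    have hlog : Real.log n = ∑ p ∈ n.factorization.support,
        (n.factorization p : ℝ) * Real.log p := by
      rw [Real.log_nat_eq_sum_factorization n]; rfl
    rw [hlog]
    have hsub : n.factorization.support ⊆ P y := by
      intro p hp
      rw [Nat.support_factorization] at hp
      have hpp := Nat.prime_of_mem_primeFactors hp
      have hdvd := Nat.dvd_of_mem_primeFactors hp
      have hle : (p : ℝ) ≤ y := h3 p hpp hdvd
      have hle' : p ≤ ⌊y⌋₊ := Nat.le_floor hle
      exact Finset.mem_filter.mpr ⟨Finset.mem_range.mpr (by omega), hpp⟩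
    refine Finset.sum_subset hsub ?_
    intro p hpP hnotin
    rw [Finsupp.notMem_support_iff.mp hnotin]
    simp
  calc ∑ n ∈ S y s, Real.log n
      = ∑ n ∈ S y s, ∑ p ∈ P y, ∑ k ∈ Finset.Icc 1 K,
          (if p ^ k ∣ n then Real.log p else 0) := Finset.sum_congr rfl hident
  _ = ∑ p ∈ P y, ∑ k ∈ Finset.Icc 1 K, ∑ n ∈ S y s,
          (if p ^ k ∣ n then Real.log p else 0) := by
        rw [Finset.sum_comm]
        exact Finset.sum_congr rfl fun p _ => Finset.sum_comm
  _ ≤ _ := by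
        refine Finset.sum_le_sum fun p hp => Finset.sum_le_sum fun k _ => ?_
        rcases Finset.mem_filter.mp hp with ⟨_, hpp⟩
        have hpk0 : 0 < p ^ k := pow_pos hpp.pos k
        have hlp : 0 ≤ Real.log p := Real.log_natCast_nonneg p
        rw [← Finset.sum_filter, Finset.sum_const, nsmul_eq_mul]
        rw [mul_comm (Real.log p)]
        refine mul_le_mul_of_nonneg_right ?_ hlp
        have hcard : ((S y s).filter (fun n => p ^ k ∣ n)).card ≤ Psi y (s / (p : ℝ) ^ k) := by
          rw [Psi_eq_card]
          apply Finset.card_le_card_of_injOn (fun n => n / p ^ k)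
          · intro n hn
            rcases Finset.mem_filter.mp hn with ⟨hnS, hdvd⟩
            rcases mem_S.mp hnS with ⟨⟨h1, h2⟩, h3⟩
            have hn0 : n ≠ 0 := by omega
            have hle : p ^ k ≤ n := Nat.le_of_dvd (by omega) hdvd
            refine mem_S.mpr ⟨⟨?_, ?_⟩, ?_⟩
            · exact (Nat.one_le_div_iff hpk0).mpr hle
            · apply Nat.le_floor
              have hcast : ((n / p ^ k : ℕ) : ℝ) = (n : ℝ) / ((p : ℝ) ^ k) := by
                rw [Nat.cast_div hdvd (by positivity)]
                push_cast
                ring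
              rw [hcast]
              have hns : (n : ℝ) ≤ s := by
                calc (n : ℝ) ≤ (⌊s⌋₊ : ℝ) := by exact_mod_cast h2
                _ ≤ s := Nat.floor_le (by linarith)
              gcongr
            · intro q hq hqdvd
              exact h3 q hq (hqdvd.trans (Nat.div_dvd_of_dvd hdvd))
          · intro a ha b hb hab
            rcases Finset.mem_filter.mp ha with ⟨_, hda⟩
            rcases Finset.mem_filter.mp hb with ⟨_, hdb⟩
            dsimp only at hab
            have h2 : a / p ^ k * p ^ k = b / p ^ k * p ^ k := by rw [hab]
            rwa [Nat.div_mul_cancel hda, Nat.div_mul_cancel hdb] at h2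
        exact_mod_cast hcard

/-- Lower bound for the sum of logs. -/
lemma sum_log_ge {y s : ℝ} (hs : 1 ≤ s) :
    (Real.log s / 2) * (Psi y s : ℝ) ≤
      (Real.log s / 2) * (Psi y (Real.sqrt s) : ℝ) + ∑ n ∈ S y s, Real.log n := by
  classical
  set v := Real.log s with hv
  have hv0 : 0 ≤ v := Real.log_nonneg hs
  set A := Finset.filter (fun n : ℕ => (n : ℝ) ≤ Real.sqrt s) (S y s) with hA
  set Bs := Finset.filter (fun n : ℕ => ¬ (n : ℝ) ≤ Real.sqrt s) (S y s) with hB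
  have hcard : (S y s).card = A.card + Bs.card := by
    rw [hA, hB]
    exact (Finset.card_filter_add_card_filter_not
      (s := S y s) (p := fun n : ℕ => (n : ℝ) ≤ Real.sqrt s)).symm
  have hAle : A.card ≤ Psi y (Real.sqrt s) := by
    rw [Psi_eq_card]
    apply Finset.card_le_card
    intro n hn
    rcases Finset.mem_filter.mp hn with ⟨hnS, hle⟩
    rcases mem_S.mp hnS with ⟨⟨h1, _⟩, h3⟩
    exact mem_S.mpr ⟨⟨h1, Nat.le_floor hle⟩, h3⟩
  have hBsum : (Bs.card : ℝ) * (v / 2) ≤ ∑ n ∈ Bs, Real.log n := by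
    have hb : ∀ n ∈ Bs, v / 2 ≤ Real.log n := by
      intro n hn
      rcases Finset.mem_filter.mp hn with ⟨hnS, hgt⟩
      push_neg at hgt
      have hs0 : (0 : ℝ) < Real.sqrt s := Real.sqrt_pos.mpr (by linarith)
      have h1 : Real.log (Real.sqrt s) ≤ Real.log n := Real.log_le_log hs0 hgt.le
      rw [Real.log_sqrt (by linarith)] at h1
      exact h1
    have := Finset.card_nsmul_le_sum Bs (fun n => Real.log ((n : ℕ) : ℝ)) (v / 2) hb
    rw [nsmul_eq_mul] at this
    exact this
  have hsub : ∑ n ∈ Bs, Real.log n ≤ ∑ n ∈ S y s, Real.log n :=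
    Finset.sum_le_sum_of_subset_of_nonneg (Finset.filter_subset _ _)
      (fun n _ _ => Real.log_natCast_nonneg n)
  have hACast : (A.card : ℝ) ≤ (Psi y (Real.sqrt s) : ℝ) := by exact_mod_cast hAle
  have hPsiEq : (Psi y s : ℝ) = (A.card : ℝ) + (Bs.card : ℝ) := by
    rw [Psi_eq_card]; exact_mod_cast congrArg (Nat.cast : ℕ → ℝ) hcard
  nlinarith [mul_le_mul_of_nonneg_left hACast (show (0:ℝ) ≤ v / 2 by linarith)]

/-- The exponent function. -/
noncomputable def psif (w : ℝ) : ℝ := if w < 9 then 0 else w * Real.log w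

lemma psif_nonneg (w : ℝ) : 0 ≤ psif w := by
  unfold psif
  split_ifs with h
  · exact le_refl 0
  · push_neg at h
    have h2 : 0 ≤ Real.log w := Real.log_nonneg (by linarith)
    nlinarith

lemma psif_mono {w w' : ℝ} (h : w ≤ w') : psif w ≤ psif w' := by
  unfold psif
  split_ifs with h1 h2 h2
  · exact le_refl 0
  · push_neg at h2
    have h3 : 0 ≤ Real.log w' := Real.log_nonneg (by linarith)
    nlinarith
  · push_neg at h1; linarith
  · push_neg at h1 h2
    have hl : Real.log w ≤ Real.log w' := Real.log_le_log (by linarith) h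
    have h3 : 0 ≤ Real.log w := Real.log_nonneg (by linarith)
    nlinarith

lemma psif_ratio {w w' : ℝ} (hw : 324 ≤ w) (hw' : 0 ≤ w') (h : w' ≤ w) :
    psif w - psif w' ≤ (Real.log w + 1) * (w - w') := by
  have hw9 : ¬ (w < 9) := by linarith
  unfold psif
  rw [if_neg hw9]
  have hwpos : (0 : ℝ) < w := by linarith
  have hlogw : 0 ≤ Real.log w := Real.log_nonneg (by linarith)
  split_ifs with h'
  · -- w' < 9, so psif w' = 0 ; need w log w ≤ (log w + 1)(w - w')
    have hsq : Real.sqrt w * Real.sqrt w = w := Real.mul_self_sqrt (by linarith)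
    have hlw : Real.log w ≤ 2 * (Real.sqrt w - 1) := by
      have h1 : Real.log w = 2 * Real.log (Real.sqrt w) := by
        rw [Real.log_sqrt (by linarith)]; ring
      have h2 : Real.log (Real.sqrt w) ≤ Real.sqrt w - 1 :=
        Real.log_le_sub_one_of_pos (Real.sqrt_pos.mpr hwpos)
      linarith
    have hs18 : (18 : ℝ) ≤ Real.sqrt w := by
      have : (18 : ℝ) = Real.sqrt 324 := by
        rw [show (324 : ℝ) = 18 ^ 2 by norm_num, Real.sqrt_sq (by norm_num)]
      rw [this]
      exact Real.sqrt_le_sqrt hw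
    -- 9 log w + 9 ≤ w  from  log w ≤ 2(√w - 1) and 18 √w ≤ w
    nlinarith [hsq, hs18, hlw]
  · -- both ≥ 9
    push_neg at h'
    have hw'pos : (0 : ℝ) < w' := by linarith
    have key : w' * (Real.log w - Real.log w') ≤ w - w' := by
      have h1 := Real.log_le_sub_one_of_pos (show (0:ℝ) < w / w' by positivity)
      rw [Real.log_div (by linarith) (by linarith)] at h1
      have h2 : w / w' - 1 = (w - w') / w' := by field_simp
      rw [h2] at h1
      have h3 := mul_le_mul_of_nonneg_left h1 hw'pos.le
      rw [mul_div_cancel₀ (w - w') (ne_of_gt hw'pos) ] at h3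
      linarith [h3]
    nlinarith [key]


lemma exp_ge_729 {a : ℝ} (ha : 24 ≤ a) : (729 : ℝ) ≤ Real.exp a := by
  have h8 : (9 : ℝ) ≤ Real.exp 8 := by nlinarith [Real.add_one_le_exp (8:ℝ)]
  have h24 : Real.exp 24 = Real.exp 8 * Real.exp 8 * Real.exp 8 := by
    rw [← Real.exp_add, ← Real.exp_add]; norm_num
  have h1 : (729 : ℝ) ≤ Real.exp 24 := by nlinarith [Real.exp_pos (8:ℝ)]
  exact h1.trans (Real.exp_le_exp.mpr ha)

lemma exp5_ge : (12 : ℝ) ≤ Real.exp 5 := by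
  have h1 : (3.5 : ℝ) ≤ Real.exp 2.5 := by nlinarith [Real.add_one_le_exp (2.5:ℝ)]
  have h2 : Real.exp 5 = Real.exp 2.5 * Real.exp 2.5 := by
    rw [← Real.exp_add]; norm_num
  nlinarith [Real.exp_pos (2.5:ℝ)]

lemma master {ε₀ x y : ℝ} (hε₀ : 0 < ε₀) (hε₀4 : ε₀ ≤ 1/4)
    (hy : 2 ≤ y) (hyx : y ≤ x) (hxy : (Real.log x)^2 ≤ y)
    (hU : Real.exp (12/ε₀^2) ≤ Real.log x / Real.log y) :
    (Psi y x : ℝ) ≤ x * Real.exp (-(1 - 2*ε₀) *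
      ((Real.log x / Real.log y) * Real.log (Real.log x / Real.log y))) := by
  classical
  set L := Real.log y with hLdef
  set u := Real.log x / L with hudef
  clear_value L u
  set B := Real.exp (Real.exp (6/ε₀) * (6/ε₀)) with hBdef
  clear_value B
  have hBpos : 0 < B := by rw [hBdef]; exact Real.exp_pos _
  have hL2 : Real.log 2 ≤ L := by rw [hLdef]; exact Real.log_le_log (by norm_num) hy
  have hlog2 : (0.6931471803:ℝ) < Real.log 2 := Real.log_two_gt_d9
  have hLpos : 0 < L := by linarith only [hL2, hlog2]
  have hsq0 : (0:ℝ) < ε₀^2 := by positivity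
  have hu729 : (729:ℝ) ≤ u := by
    refine le_trans (exp_ge_729 ?_) hU
    rw [le_div_iff₀ hsq0]
    nlinarith only [hε₀, hε₀4]
  have hupos : (0:ℝ) < u := by linarith only [hu729]
  have hlogx_eq : Real.log x = u * L := by
    rw [hudef, div_mul_cancel₀ _ hLpos.ne']
  have hlogx505 : (505:ℝ) ≤ Real.log x := by
    have h1 : (729:ℝ) * Real.log 2 ≤ u * L :=
      mul_le_mul hu729 hL2 (by linarith only [hlog2]) (by linarith only [hu729])
    rw [hlogx_eq]
    linarith only [h1, hlog2]
  have hx1 : (1:ℝ) ≤ x := by linarith only [hy, hyx]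
  have hexp2 : Real.exp 2 ≤ 7.39 := by
    have h1 : Real.exp 2 = Real.exp 1 * Real.exp 1 := by
      rw [← Real.exp_add]; norm_num
    nlinarith only [Real.exp_one_lt_d9, Real.exp_pos 1, h1]
  have hexp6 : Real.exp 6 ≤ 504 := by
    have h1 : Real.exp 6 = Real.exp 2 * Real.exp 2 * Real.exp 2 := by
      rw [← Real.exp_add, ← Real.exp_add]; norm_num
    nlinarith only [hexp2, Real.exp_pos 2, h1]
  have hloglogx : 2 * Real.log (Real.log x) ≤ L := by
    have h1 : Real.log ((Real.log x)^2) ≤ Real.log y :=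
      Real.log_le_log (by positivity) hxy
    rw [Real.log_pow] at h1
    rw [hLdef]
    push_cast at h1
    linarith only [h1]
  have hllx6 : (6:ℝ) ≤ Real.log (Real.log x) := by
    calc (6:ℝ) = Real.log (Real.exp 6) := (Real.log_exp _).symm
    _ ≤ Real.log (Real.log x) := by
        apply Real.log_le_log (Real.exp_pos _)
        linarith only [hexp6, hlogx505]
  have hL12 : (12:ℝ) ≤ L := by linarith only [hloglogx, hllx6]
  have hule : u ≤ Real.log x := by
    rw [hudef]
    exact div_le_self (by linarith only [hlogx505]) (by linarith only [hL12])
  have hlogu2 : Real.log u ≤ L / 2 := by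
    have h1 : Real.log u ≤ Real.log (Real.log x) := Real.log_le_log hupos hule
    linarith only [h1, hloglogx]
  have hloguge : 12/ε₀^2 ≤ Real.log u := by
    calc 12/ε₀^2 = Real.log (Real.exp (12/ε₀^2)) := (Real.log_exp _).symm
    _ ≤ Real.log u := Real.log_le_log (Real.exp_pos _) hU
  have hLge : 8/ε₀ ≤ L := by
    have h1 : 8/ε₀ ≤ 24/ε₀^2 := by
      rw [div_le_div_iff₀ hε₀ hsq0]
      nlinarith only [hε₀, hε₀4]
    have h2 : (24:ℝ)/ε₀^2 = 2 * (12/ε₀^2) := by ring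
    linarith only [h1, h2, hloguge, hlogu2]
  have h8L : (8:ℝ) ≤ L * ε₀ := by
    rw [div_le_iff₀ hε₀] at hLge
    linarith only [hLge]
  have hE24 : (24:ℝ) ≤ 6/ε₀ := by
    rw [le_div_iff₀ hε₀]; nlinarith only [hε₀, hε₀4]
  have hE729 : (729:ℝ) ≤ Real.exp (6/ε₀) := exp_ge_729 hE24
  -- main induction
  have main : ∀ N : ℕ, ∀ s : ℝ, 1 ≤ s → s ≤ x → ⌊s⌋₊ ≤ N →
      (Psi y s : ℝ) ≤ B * s * Real.exp (-(1 - ε₀) * psif (Real.log s / L)) := by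
    intro N
    induction N with
    | zero =>
      intro s hs1 _ hfl
      have h1 : 1 ≤ ⌊s⌋₊ := Nat.le_floor (by exact_mod_cast hs1)
      omega
    | succ N ih =>
      intro s hs1 hsx hfl
      set v := Real.log s with hvdef
      set w := v / L with hwdef
      have hv0 : 0 ≤ v := Real.log_nonneg hs1
      have hw0 : 0 ≤ w := div_nonneg hv0 hLpos.le
      clear_value v w
      set G := Real.exp (-(1 - ε₀) * psif w) with hGdef
      clear_value G
      have hGpos : 0 < G := by rw [hGdef]; exact Real.exp_pos _
      have hs0 : (0:ℝ) < s := by linarith only [hs1]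
      by_cases hreg : w ≤ Real.exp (6 / ε₀)
      · -- trivial region
        have h1 : (Psi y s : ℝ) ≤ s := Psi_le_self hs0.le
        have he : psif (Real.exp (6/ε₀)) = Real.exp (6/ε₀) * (6/ε₀) := by
          unfold psif
          rw [if_neg (by push_neg; linarith only [hE729]), Real.log_exp]
        have h2 : psif w ≤ Real.exp (6/ε₀) * (6/ε₀) := by
          have hm := psif_mono hreg
          linarith only [hm, he.le]
        have h3 : (1:ℝ) ≤ B * G := by
          rw [hBdef, hGdef, ← Real.exp_add]
          have h4 : (0:ℝ) ≤ Real.exp (6/ε₀) * (6/ε₀) + -(1 - ε₀) * psif w := by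
            linarith only [mul_nonneg hε₀.le (psif_nonneg w), psif_nonneg w, h2]
          linarith only [h4, Real.add_one_le_exp
            (Real.exp (6/ε₀) * (6/ε₀) + -(1 - ε₀) * psif w)]
        calc (Psi y s : ℝ) ≤ s := h1
        _ = s * 1 := by ring
        _ ≤ s * (B * G) := by
              apply mul_le_mul_of_nonneg_left h3 hs0.le
        _ = B * s * G := by ring
      · push_neg at hreg
        have hw324 : (324:ℝ) ≤ w := by linarith only [hreg, hE729]
        have hwpos : (0:ℝ) < w := by linarith only [hw324]
        have hvwL : v = w * L := by rw [hwdef, div_mul_cancel₀ _ hLpos.ne']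
        have hwu : w ≤ u := by
          rw [hwdef, hudef, hvdef]
          have h1 : Real.log s ≤ Real.log x := Real.log_le_log hs0 hsx
          gcongr
        have hlogw2 : Real.log w ≤ L / 2 := by
          have h1 : Real.log w ≤ Real.log u := Real.log_le_log hwpos hwu
          linarith only [h1, hlogu2]
        have hεlogw : (6:ℝ) ≤ ε₀ * Real.log w := by
          have h1 : 6/ε₀ ≤ Real.log w := by
            rw [← Real.log_exp (6/ε₀)]
            exact Real.log_le_log (Real.exp_pos _) hreg.le
          rw [div_le_iff₀ hε₀] at h1
          linarith only [h1]
        have hlogw0 : (0:ℝ) ≤ Real.log w := by nlinarith only [hεlogw, hε₀, hε₀4]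
        have hcond : (1 - ε₀) * (Real.log w + 1) ≤ (1/2 - ε₀/4) * L := by
          have t1 := mul_le_mul_of_nonneg_left hlogw2
            (show (0:ℝ) ≤ 1 - ε₀ by linarith only [hε₀4])
          linarith only [t1, h8L, hε₀]
        -- the ratio estimate
        have ratio : ∀ t : ℝ, 0 ≤ t → t ≤ v →
            Real.exp (-(1 - ε₀) * psif ((v - t)/L)) ≤
              Real.exp ((1/2 - ε₀/4) * t) * G := by
          intro t ht htv
          rw [hGdef, ← Real.exp_add, Real.exp_le_exp]
          have hsub : psif w - psif ((v - t)/L) ≤ (Real.log w + 1) * (t / L) := by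
            have h1 := psif_ratio hw324
              (show 0 ≤ (v - t)/L from div_nonneg (by linarith only [htv]) hLpos.le)
              (show (v - t)/L ≤ w from by rw [hwdef]; gcongr; linarith only [ht])
            have h2 : w - (v - t)/L = t / L := by
              rw [hwdef]; field_simp [hLpos.ne']; ring
            rwa [h2] at h1
          have h3 : (1 - ε₀) * (psif w - psif ((v - t)/L)) ≤ (1/2 - ε₀/4) * t := by
            have hq : ((1/2 - ε₀/4) * L) * (t / L) = (1/2 - ε₀/4) * t := by
              field_simp [hLpos.ne']
            calc (1 - ε₀) * (psif w - psif ((v - t)/L))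
                ≤ (1 - ε₀) * ((Real.log w + 1) * (t / L)) := by
                  apply mul_le_mul_of_nonneg_left hsub (by linarith only [hε₀4])
            _ = ((1 - ε₀) * (Real.log w + 1)) * (t / L) := by ring
            _ ≤ ((1/2 - ε₀/4) * L) * (t / L) := by
                  apply mul_le_mul_of_nonneg_right hcond
                    (div_nonneg ht hLpos.le)
            _ = (1/2 - ε₀/4) * t := hq
          linarith only [h3]
        -- size facts
        have hexpv : Real.exp v = s := by rw [hvdef]; exact Real.exp_log hs0
        have hvbig : (224:ℝ) ≤ v := by
          have h1 : (324:ℝ) * Real.log 2 ≤ w * L :=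
            mul_le_mul hw324 hL2 (by linarith only [hlog2]) (by linarith only [hw324])
          rw [hvwL]
          linarith only [h1, hlog2]
        have hs16 : (16:ℝ) ≤ s := by
          rw [← hexpv]
          calc (16:ℝ) ≤ 224 + 1 := by norm_num
          _ ≤ v + 1 := by linarith only [hvbig]
          _ ≤ Real.exp v := Real.add_one_le_exp v
        have hfloor1 : 1 ≤ ⌊s⌋₊ := Nat.le_floor (by exact_mod_cast hs1)
        -- induction hypothesis, packaged
        have IH : ∀ t : ℝ, 1 ≤ t → t ≤ s / 2 →
            (Psi y t : ℝ) ≤ B * t * Real.exp (-(1 - ε₀) * psif (Real.log t / L)) := by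
          intro t ht1 ht2
          apply ih t ht1 (by linarith only [ht2, hsx, hs0])
          have h1 : (⌊t⌋₊ : ℝ) ≤ s/2 := le_trans (Nat.floor_le (by linarith only [ht1])) ht2
          have h2 : s/2 < (⌊s⌋₊ : ℝ) := by
            have h3 := Nat.lt_floor_add_one s
            linarith only [h3, hs16]
          have h3 : ⌊t⌋₊ < ⌊s⌋₊ := by exact_mod_cast h1.trans_lt h2
          omega
        have boundt : ∀ t : ℝ, 2 ≤ t → t ≤ s →
            (Psi y (s / t) : ℝ) ≤ B * (s / t) *
              Real.exp (-(1 - ε₀) * psif ((v - Real.log t)/L)) := by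
          intro t h2t hts
          have ht0 : (0:ℝ) < t := by linarith only [h2t]
          have h1 : 1 ≤ s / t := (one_le_div ht0).mpr hts
          have h2 : s / t ≤ s / 2 := by gcongr
          have h3 := IH (s/t) h1 h2
          rwa [Real.log_div hs0.ne' ht0.ne', ← hvdef] at h3
        -- piece 0 : the sqrt term
        have hsq2 : (2:ℝ) ≤ Real.sqrt s := by
          have h1 : (2:ℝ) = Real.sqrt 4 := by
            rw [show (4:ℝ) = 2^2 by norm_num, Real.sqrt_sq (by norm_num)]
          rw [h1]
          exact Real.sqrt_le_sqrt (by linarith only [hs16])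
        have hsqs : Real.sqrt s ≤ s := by
          rw [Real.sqrt_le_left hs0.le]
          nlinarith only [hs16]
        have hPsiSqrt : (Psi y (Real.sqrt s) : ℝ) ≤ (1/4) * (B * s * G) := by
          have h2 := boundt (Real.sqrt s) hsq2 hsqs
          rw [Real.log_sqrt hs0.le] at h2
          have h3 : s / Real.sqrt s = Real.exp (v/2) := by
            rw [Real.div_sqrt]
            have h4 : s = Real.exp (v/2) ^ 2 := by
              rw [sq, ← Real.exp_add, show v/2 + v/2 = v by ring, hexpv]
            rw [h4, Real.sqrt_sq (Real.exp_pos _).le]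
          have h6 : v - Real.log s / 2 = v/2 := by rw [← hvdef]; ring
          rw [h6] at h2
          have h7 : Real.exp (v/2) * Real.exp ((1/2 - ε₀/4) * (v/2)) ≤ (1/4) * s := by
            rw [← Real.exp_add, ← hexpv]
            have h8 : v/2 + (1/2 - ε₀/4) * (v/2) ≤ v - 2 := by
              linarith only [hvbig, mul_nonneg hε₀.le hv0]
            have h10 : Real.exp 2 = Real.exp 1 * Real.exp 1 := by
              rw [← Real.exp_add]; norm_num
            have h9 : (4:ℝ) ≤ Real.exp 2 := by
              nlinarith only [Real.exp_one_gt_d9, h10]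
            have h11 : Real.exp (-2:ℝ) ≤ 1/4 := by
              have h12 : Real.exp (-2:ℝ) * Real.exp 2 = 1 := by
                rw [← Real.exp_add]; norm_num
              nlinarith only [h12, h9, Real.exp_pos (-2:ℝ)]
            calc Real.exp (v/2 + (1/2 - ε₀/4)*(v/2)) ≤ Real.exp (v - 2) :=
                  Real.exp_le_exp.mpr h8
            _ = Real.exp v * Real.exp (-2:ℝ) := by
                  rw [← Real.exp_add]; ring_nf
            _ ≤ Real.exp v * (1/4) := by
                  apply mul_le_mul_of_nonneg_left h11 (Real.exp_pos v).le
            _ = (1/4) * Real.exp v := by ring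
          have h13 : (Psi y (Real.sqrt s) : ℝ) = (Psi y (s / Real.sqrt s) : ℝ) := by
            rw [Real.div_sqrt]
          rw [h13]
          calc (Psi y (s / Real.sqrt s) : ℝ)
              ≤ B * (s / Real.sqrt s) * Real.exp (-(1 - ε₀) * psif ((v/2)/L)) := h2
          _ = B * Real.exp (v/2) * Real.exp (-(1 - ε₀) * psif ((v - v/2)/L)) := by
                rw [h3, show v - v/2 = v/2 by ring]
          _ ≤ B * Real.exp (v/2) * (Real.exp ((1/2 - ε₀/4) * (v/2)) * G) := by
                apply mul_le_mul_of_nonneg_left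
                  (ratio (v/2) (by linarith only [hv0]) (by linarith only [hv0]))
                  (mul_nonneg hBpos.le (Real.exp_pos _).le)
          _ = (Real.exp (v/2) * Real.exp ((1/2 - ε₀/4) * (v/2))) * (B * G) := by ring
          _ ≤ ((1/4) * s) * (B * G) := by
                apply mul_le_mul_of_nonneg_right h7 (mul_nonneg hBpos.le hGpos.le)
          _ = (1/4) * (B * s * G) := by ring
        -- the double sum bound
        set C1 := Real.exp (-(1 - ε₀) * psif ((v - L)/L)) with hC1def
        clear_value C1
        have hC1pos : 0 < C1 := by rw [hC1def]; exact Real.exp_pos _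
        have hyLs : y ≤ s := by
          have h1 : L ≤ v := by nlinarith only [hvwL, hw324, hLpos]
          calc y = Real.exp L := by rw [hLdef, Real.exp_log (by linarith only [hy])]
          _ ≤ Real.exp v := Real.exp_le_exp.mpr h1
          _ = s := hexpv
        have inner_bound : ∀ p ∈ P y,
            ∑ k ∈ Finset.Icc 1 ⌊s⌋₊, Real.log p * (Psi y (s / (p:ℝ)^k) : ℝ)
            ≤ B * s * C1 * (Real.log p / p) + B * s * G * (4 * (Real.log p / p)) := by
          intro p hp
          obtain ⟨hpp, hpy⟩ := mem_P (by linarith only [hy]) hp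
          have hp2 : (2:ℝ) ≤ p := by exact_mod_cast hpp.two_le
          have hp0 : (0:ℝ) < p := by linarith only [hp2]
          have hlogp0 : (0:ℝ) ≤ Real.log p := Real.log_natCast_nonneg p
          have hsplit : Finset.Icc 1 ⌊s⌋₊ = insert 1 (Finset.Icc 2 ⌊s⌋₊) := by
            ext k
            simp only [Finset.mem_Icc, Finset.mem_insert]
            omega
          rw [hsplit, Finset.sum_insert (by simp)]
          have t1 : Real.log p * (Psi y (s/(p:ℝ)^1) : ℝ) ≤ B * s * C1 * (Real.log p / p) := by
            rw [pow_one]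
            have hb := boundt p hp2 (by linarith only [hpy, hyLs])
            have hmono : Real.exp (-(1 - ε₀) * psif ((v - Real.log p)/L)) ≤ C1 := by
              rw [hC1def, Real.exp_le_exp]
              have h1 : (v - L)/L ≤ (v - Real.log p)/L := by
                gcongr
                have h4 : Real.log p ≤ Real.log y := Real.log_le_log hp0 hpy
                linarith only [h4, hLdef.ge]
              have h2 := psif_mono h1
              have h3 := mul_le_mul_of_nonneg_left h2
                (show (0:ℝ) ≤ 1 - ε₀ by linarith only [hε₀4])
              linarith only [h3]
            calc Real.log p * (Psi y (s/(p:ℝ)) : ℝ)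
                ≤ Real.log p * (B * (s/(p:ℝ)) *
                    Real.exp (-(1 - ε₀) * psif ((v - Real.log p)/L))) := by
                  apply mul_le_mul_of_nonneg_left hb hlogp0
            _ ≤ Real.log p * (B * (s/(p:ℝ)) * C1) := by
                  apply mul_le_mul_of_nonneg_left ?_ hlogp0
                  apply mul_le_mul_of_nonneg_left hmono
                    (mul_nonneg hBpos.le (div_nonneg hs0.le hp0.le))
            _ = B * s * C1 * (Real.log p / p) := by
                  field_simp
          set r := Real.exp (-(Real.log p / 2)) with hrdef
          clear_value r
          have hr0 : (0:ℝ) < r := by rw [hrdef]; exact Real.exp_pos _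
          have hr34 : r ≤ 3/4 := by
            have h2 : Real.log (16/9 : ℝ) = 2 * Real.log (4/3 : ℝ) := by
              rw [show (16/9 : ℝ) = (4/3)^2 by norm_num, Real.log_pow]
              push_cast; ring
            have h1 : Real.log (16/9 : ℝ) ≤ Real.log 2 :=
              Real.log_le_log (by norm_num) (by norm_num)
            have h3 : Real.log 2 ≤ Real.log p := Real.log_le_log (by norm_num) hp2
            have h4 : r ≤ Real.exp (-(Real.log (4/3:ℝ))) := by
              rw [hrdef, Real.exp_le_exp]; linarith only [h1, h2, h3]
            have h5 : Real.exp (-(Real.log (4/3:ℝ))) = 3/4 := by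
              rw [Real.exp_neg, Real.exp_log (by norm_num)]; norm_num
            linarith only [h4, h5.le]
          have hr2 : r^2 = 1/(p:ℝ) := by
            rw [hrdef, sq, ← Real.exp_add,
              show -(Real.log p/2) + -(Real.log p/2) = -Real.log p by ring,
              Real.exp_neg, Real.exp_log hp0, one_div]
          have perk : ∀ k ∈ Finset.Icc 2 ⌊s⌋₊,
              Real.log p * (Psi y (s/(p:ℝ)^k) : ℝ) ≤ B * s * G * (Real.log p * r^k) := by
            intro k hk
            have hk2 : 2 ≤ k := (Finset.mem_Icc.mp hk).1
            have hpk_pos : (0:ℝ) < (p:ℝ)^k := pow_pos hp0 k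
            have hrk_pos : (0:ℝ) < r^k := pow_pos hr0 k
            by_cases hpk : (p:ℝ)^k ≤ s
            · have h2pk : (2:ℝ) ≤ (p:ℝ)^k := by
                calc (2:ℝ) ≤ (p:ℝ) := hp2
                _ ≤ (p:ℝ)^k := le_self_pow₀ (by linarith only [hp2]) (by omega)
              have hb := boundt ((p:ℝ)^k) h2pk hpk
              have hlpk : Real.log ((p:ℝ)^k) = (k:ℝ) * Real.log p := by
                rw [Real.log_pow]
              rw [hlpk] at hb
              have hkl0 : (0:ℝ) ≤ (k:ℝ)*Real.log p :=
                mul_nonneg (Nat.cast_nonneg k) hlogp0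
              have hklv : (k:ℝ) * Real.log p ≤ v := by
                rw [← hlpk]
                calc Real.log ((p:ℝ)^k) ≤ Real.log s := Real.log_le_log hpk_pos hpk
                _ = v := hvdef.symm
              have hrat := ratio ((k:ℝ) * Real.log p) hkl0 hklv
              have hsimp : (s/(p:ℝ)^k) *
                  Real.exp ((1/2 - ε₀/4) * ((k:ℝ)*Real.log p)) ≤ s * r^k := by
                have hpk_exp : ((p:ℝ)^k)⁻¹ = Real.exp (-((k:ℝ) * Real.log p)) := by
                  rw [Real.exp_neg, ← hlpk, Real.exp_log hpk_pos]
                have hrk : r^k = Real.exp ((k:ℝ) * (-(Real.log p/2))) := by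
                  rw [hrdef]
                  exact (Real.exp_nat_mul _ k).symm
                rw [div_eq_mul_inv, hpk_exp, mul_assoc, ← Real.exp_add, hrk]
                apply mul_le_mul_of_nonneg_left ?_ hs0.le
                rw [Real.exp_le_exp]
                linarith only [mul_nonneg hε₀.le hkl0]
              calc Real.log p * (Psi y (s/(p:ℝ)^k) : ℝ)
                  ≤ Real.log p * (B * (s/(p:ℝ)^k) *
                      Real.exp (-(1 - ε₀) * psif ((v - (k:ℝ)*Real.log p)/L))) := by
                    apply mul_le_mul_of_nonneg_left hb hlogp0
              _ ≤ Real.log p * (B * (s/(p:ℝ)^k) *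
                      (Real.exp ((1/2 - ε₀/4) * ((k:ℝ)*Real.log p)) * G)) := by
                    apply mul_le_mul_of_nonneg_left ?_ hlogp0
                    apply mul_le_mul_of_nonneg_left hrat
                      (mul_nonneg hBpos.le (div_nonneg hs0.le hpk_pos.le))
              _ = Real.log p * (B * ((s/(p:ℝ)^k) *
                      Real.exp ((1/2 - ε₀/4) * ((k:ℝ)*Real.log p))) * G) := by ring
              _ ≤ Real.log p * (B * (s * r^k) * G) := by
                    apply mul_le_mul_of_nonneg_left ?_ hlogp0
                    apply mul_le_mul_of_nonneg_right
                      (mul_le_mul_of_nonneg_left hsimp hBpos.le) hGpos.le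
              _ = B * s * G * (Real.log p * r^k) := by ring
            · have h0 : Psi y (s/(p:ℝ)^k) = 0 := by
                apply Psi_eq_zero
                rw [div_lt_one hpk_pos]
                linarith only [not_le.mp hpk]
              rw [h0]
              push_cast
              have h5 : (0:ℝ) ≤ B * s * G * (Real.log p * r^k) :=
                mul_nonneg (mul_nonneg (mul_nonneg hBpos.le hs0.le) hGpos.le)
                  (mul_nonneg hlogp0 hrk_pos.le)
              linarith only [h5]
          have t2 : ∑ k ∈ Finset.Icc 2 ⌊s⌋₊, Real.log p * (Psi y (s/(p:ℝ)^k) : ℝ)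
              ≤ B * s * G * (4 * (Real.log p / p)) := by
            have hgeom : ∑ k ∈ Finset.Icc 2 ⌊s⌋₊, r^k ≤ 4 * r^2 := by
              have hIcc : Finset.Icc 2 ⌊s⌋₊ = Finset.Ico 2 (⌊s⌋₊ + 1) := by
                rw [Finset.Ico_add_one_right_eq_Icc]
              rw [hIcc]
              have hr1 : r ≠ 1 := by
                intro hcon
                rw [hcon] at hr34
                norm_num at hr34
              rw [geom_sum_Ico hr1 (by omega)]
              have h1r : (0:ℝ) < 1 - r := by linarith only [hr34]
              have heq : (r^(⌊s⌋₊+1) - r^2)/(r - 1) = (r^2 - r^(⌊s⌋₊+1))/(1 - r) := by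
                rw [div_eq_div_iff (by linarith only [h1r]) (by linarith only [h1r])]
                ring
              rw [heq, div_le_iff₀ h1r]
              have hrpow : (0:ℝ) ≤ r^(⌊s⌋₊+1) := pow_nonneg hr0.le _
              nlinarith only [hrpow, hr34, pow_nonneg hr0.le 2, hr0]
            calc ∑ k ∈ Finset.Icc 2 ⌊s⌋₊, Real.log p * (Psi y (s/(p:ℝ)^k) : ℝ)
                ≤ ∑ k ∈ Finset.Icc 2 ⌊s⌋₊, B * s * G * (Real.log p * r^k) :=
                  Finset.sum_le_sum perk
            _ = B * s * G * Real.log p * ∑ k ∈ Finset.Icc 2 ⌊s⌋₊, r^k := by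
                  rw [Finset.mul_sum]
                  exact Finset.sum_congr rfl fun k _ => by ring
            _ ≤ B * s * G * Real.log p * (4 * r^2) := by
                  apply mul_le_mul_of_nonneg_left hgeom
                  exact mul_nonneg (mul_nonneg (mul_nonneg hBpos.le hs0.le) hGpos.le) hlogp0
            _ = B * s * G * (4 * (Real.log p / p)) := by
                  rw [hr2]; field_simp
          exact add_le_add t1 t2
        -- summing over p
        have hMert : ∑ p ∈ P y, Real.log p / p ≤ L + 2 := by
          have h1 := mertens hy
          rw [← hLdef] at h1
          exact h1
        have hsum0 : (0:ℝ) ≤ ∑ p ∈ P y, Real.log p / p := by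
          apply Finset.sum_nonneg
          intro p hp
          exact div_nonneg (Real.log_natCast_nonneg p) (Nat.cast_nonneg p)
        have hC1G : C1 * (L + 2) ≤ (v/8) * G := by
          have h1 : psif w - psif ((v - L)/L) ≤ (Real.log w + 1) * 1 := by
            have h2 := psif_ratio hw324
              (show 0 ≤ (v - L)/L from div_nonneg
                (by nlinarith only [hvwL, hw324, hLpos]) hLpos.le)
              (show (v - L)/L ≤ w from by rw [hwdef]; gcongr; linarith only [hLpos])
            have h3 : w - (v - L)/L = 1 := by
              rw [hwdef]; field_simp [hLpos.ne']; ring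
            rwa [h3] at h2
          have h3 : C1 ≤ Real.exp ((1 - ε₀) * (Real.log w + 1)) * G := by
            rw [hC1def, hGdef, ← Real.exp_add, Real.exp_le_exp]
            have h4 := mul_le_mul_of_nonneg_left h1
              (show (0:ℝ) ≤ 1 - ε₀ by linarith only [hε₀4])
            linarith only [h4]
          have h4 : Real.exp ((1 - ε₀) * (Real.log w + 1)) ≤ w * Real.exp (-5 : ℝ) := by
            have h5 : (1 - ε₀) * (Real.log w + 1) ≤ Real.log w + (-5) := by
              linarith only [hεlogw, mul_nonneg hε₀.le hlogw0, hε₀]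
            calc Real.exp ((1 - ε₀)*(Real.log w + 1)) ≤ Real.exp (Real.log w + (-5)) :=
                  Real.exp_le_exp.mpr h5
            _ = w * Real.exp (-5:ℝ) := by rw [Real.exp_add, Real.exp_log hwpos]
          have h6 : Real.exp (-5:ℝ) ≤ 1/12 := by
            have h7 := exp5_ge
            have h8 : Real.exp (-5:ℝ) * Real.exp 5 = 1 := by
              rw [← Real.exp_add]; norm_num
            nlinarith only [h7, h8, Real.exp_pos (-5:ℝ)]
          have h9 : L + 2 ≤ (3/2) * L := by linarith only [hL12]
          calc C1 * (L + 2)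
              ≤ (Real.exp ((1 - ε₀)*(Real.log w + 1)) * G) * (L + 2) := by
                apply mul_le_mul_of_nonneg_right h3 (by linarith only [hL12])
          _ ≤ ((w * Real.exp (-5:ℝ)) * G) * (L + 2) := by
                apply mul_le_mul_of_nonneg_right
                  (mul_le_mul_of_nonneg_right h4 hGpos.le) (by linarith only [hL12])
          _ ≤ ((w * (1/12)) * G) * ((3/2) * L) := by
                apply mul_le_mul ?_ h9 (by linarith only [hL12]) ?_
                · apply mul_le_mul_of_nonneg_right
                    (mul_le_mul_of_nonneg_left h6 hwpos.le) hGpos.le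
                · exact mul_nonneg (mul_nonneg hwpos.le (by norm_num)) hGpos.le
          _ = (w * L / 8) * G := by ring
          _ = (v/8) * G := by rw [hvwL]
        have h4L : 4 * (L + 2) ≤ v / 8 := by
          have h1 : (324:ℝ) * L ≤ w * L :=
            mul_le_mul_of_nonneg_right hw324 hLpos.le
          rw [hvwL] at *
          linarith only [h1, hL12]
        have key3 : ∑ p ∈ P y, ∑ k ∈ Finset.Icc 1 ⌊s⌋₊,
            Real.log p * (Psi y (s / (p:ℝ)^k) : ℝ) ≤ (v/4) * (B * s * G) := by
          have hBsC1 : (0:ℝ) ≤ B * s * C1 :=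
            mul_nonneg (mul_nonneg hBpos.le hs0.le) hC1pos.le
          have hBsG : (0:ℝ) ≤ B * s * G :=
            mul_nonneg (mul_nonneg hBpos.le hs0.le) hGpos.le
          calc ∑ p ∈ P y, ∑ k ∈ Finset.Icc 1 ⌊s⌋₊, Real.log p * (Psi y (s / (p:ℝ)^k) : ℝ)
              ≤ ∑ p ∈ P y, (B * s * C1 * (Real.log p / p) +
                  B * s * G * (4 * (Real.log p / p))) :=
                Finset.sum_le_sum inner_bound
          _ = (B * s * C1) * (∑ p ∈ P y, Real.log p / p) +
                (B * s * G) * (∑ p ∈ P y, 4 * (Real.log p / p)) := by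
                rw [Finset.sum_add_distrib, ← Finset.mul_sum, ← Finset.mul_sum]
          _ = (B * s * C1) * (∑ p ∈ P y, Real.log p / p) +
                (4 * (B * s * G)) * (∑ p ∈ P y, Real.log p / p) := by
                rw [← Finset.mul_sum (P y) (fun p : ℕ => Real.log p / p) (4:ℝ)]
                ring
          _ ≤ (B * s * C1) * (L + 2) + (4 * (B * s * G)) * (L + 2) := by
                have e1 := mul_le_mul_of_nonneg_left hMert hBsC1
                have e2 := mul_le_mul_of_nonneg_left hMert
                  (by linarith only [hBsG] : (0:ℝ) ≤ 4 * (B * s * G))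
                linarith only [e1, e2]
          _ ≤ (B * s) * ((v/8) * G) + (B * s * G) * (v/8) := by
                have e1 : (B * s * C1) * (L + 2) = (B * s) * (C1 * (L + 2)) := by ring
                have e2 : (4 * (B * s * G)) * (L + 2) = (B * s * G) * (4 * (L + 2)) := by
                  ring
                rw [e1, e2]
                have f1 := mul_le_mul_of_nonneg_left hC1G
                  (mul_nonneg hBpos.le hs0.le)
                have f2 := mul_le_mul_of_nonneg_left h4L hBsG
                linarith only [f1, f2]
          _ = (v/4) * (B * s * G) := by ring
        -- assemble
        have key1 := sum_log_ge (y := y) hs1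
        rw [← hvdef] at key1
        have key2 := sum_log_le hy hs1
        have hv2pos : (0:ℝ) < v / 2 := by linarith only [hvbig]
        have hPsiSqrt' : (v/2) * (Psi y (Real.sqrt s) : ℝ) ≤ (v/2)*((1/4) * (B * s * G)) :=
          mul_le_mul_of_nonneg_left hPsiSqrt (by linarith only [hvbig])
        have hBsG0 : (0:ℝ) ≤ B * s * G :=
          mul_nonneg (mul_nonneg hBpos.le hs0.le) hGpos.le
        have hfin : (v/2) * (Psi y s : ℝ) ≤ (v/2) * (B * s * G) := by
          have hk := key2.trans key3
          nlinarith only [key1, hk, hPsiSqrt', hBsG0, hvbig]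
        have hfin2 := (mul_le_mul_iff_right₀ hv2pos).mp hfin
        calc (Psi y s : ℝ) ≤ B * s * G := hfin2
        _ = B * s * G := rfl
  -- conclusion
  have hxx := main ⌊x⌋₊ x hx1 le_rfl le_rfl
  rw [← hudef] at hxx
  have hpsifu : psif u = u * Real.log u := by
    unfold psif
    rw [if_neg (by push_neg; linarith only [hu729])]
  rw [hpsifu] at hxx
  have hulogu : Real.exp (6/ε₀) * (6/ε₀) ≤ ε₀ * (u * Real.log u) := by
    have h1 : Real.exp (6/ε₀) ≤ Real.exp (12/ε₀^2) := by
      apply Real.exp_le_exp.mpr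
      rw [div_le_div_iff₀ hε₀ hsq0]
      nlinarith only [hε₀, hε₀4]
    have h2 : (0:ℝ) ≤ 6/ε₀ := by positivity
    have h4 : ε₀ * (Real.exp (12/ε₀^2) * (12/ε₀^2)) ≤ ε₀ * (u * Real.log u) := by
      apply mul_le_mul_of_nonneg_left ?_ hε₀.le
      apply mul_le_mul hU hloguge (by positivity) (by linarith only [hupos])
    have h5 : Real.exp (6/ε₀) * (6/ε₀) ≤ ε₀ * (Real.exp (12/ε₀^2) * (12/ε₀^2)) := by
      have h6 : ε₀ * (Real.exp (12/ε₀^2) * (12/ε₀^2)) =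
          Real.exp (12/ε₀^2) * (12/ε₀) := by
        field_simp
      rw [h6]
      have h7 : (6:ℝ)/ε₀ ≤ 12/ε₀ := by gcongr <;> norm_num
      exact mul_le_mul h1 h7 h2 (Real.exp_pos _).le
    linarith only [h4, h5]
  have hfinal : B * Real.exp (-(1 - ε₀) * (u * Real.log u)) ≤
      Real.exp (-(1 - 2*ε₀) * (u * Real.log u)) := by
    rw [hBdef, ← Real.exp_add, Real.exp_le_exp]
    linarith only [hulogu]
  calc (Psi y x : ℝ) ≤ B * x * Real.exp (-(1 - ε₀) * (u * Real.log u)) := hxx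
  _ = x * (B * Real.exp (-(1 - ε₀) * (u * Real.log u))) := by ring
  _ ≤ x * Real.exp (-(1 - 2*ε₀) * (u * Real.log u)) := by
        apply mul_le_mul_of_nonneg_left hfinal (by linarith only [hx1])

end SmoothPf

open Classical in
theorem stmt_1 :
    ∀ ε > (0:ℝ), ∃ U : ℝ, ∀ x y : ℝ, 2 ≤ y → y ≤ x → (Real.log x) ^ 2 ≤ y →
      U ≤ Real.log x / Real.log y →
      (((Finset.Icc 1 ⌊x⌋₊).filter (fun n : ℕ =>
          ∀ p : ℕ, p.Prime → p ∣ n → (p : ℝ) ≤ y)).card : ℝ) ≤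
        x * (Real.log x / Real.log y) ^
          (-(1 - ε) * (Real.log x / Real.log y)) := by
  intro ε hε
  refine ⟨Real.exp (12 / (min ε (1/2) / 2)^2), ?_⟩
  intro x y hy hyx hsq hU
  set ε₀ := min ε (1/2) / 2 with hε₀def
  have hε₀pos : 0 < ε₀ := by
    rw [hε₀def]
    have h1 : 0 < min ε (1/2) := lt_min hε (by norm_num)
    linarith only [h1]
  have hε₀4 : ε₀ ≤ 1/4 := by
    have h1 : min ε (1/2) ≤ 1/2 := min_le_right _ _
    rw [hε₀def]; linarith only [h1]
  have hm := SmoothPf.master hε₀pos hε₀4 hy hyx hsq hU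
  have hcard : (((Finset.Icc 1 ⌊x⌋₊).filter (fun n : ℕ =>
      ∀ p : ℕ, p.Prime → p ∣ n → (p : ℝ) ≤ y)).card : ℝ) = (SmoothPf.Psi y x : ℝ) := rfl
  rw [hcard]
  set u := Real.log x / Real.log y with hudef
  have hu0 : (0:ℝ) < u := lt_of_lt_of_le (Real.exp_pos _) hU
  have hu1 : (1:ℝ) ≤ u := by
    have h1 := Real.add_one_le_exp (12 / ε₀^2)
    have h2 : (0:ℝ) ≤ 12 / ε₀^2 := by positivity
    linarith only [h1, h2, hU]
  have hlogu0 : (0:ℝ) ≤ Real.log u := Real.log_nonneg hu1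
  have hx0 : (0:ℝ) ≤ x := by linarith only [hy, hyx]
  have hrpow : u ^ (-(1 - ε) * u) = Real.exp (Real.log u * (-(1 - ε) * u)) :=
    Real.rpow_def_of_pos hu0 _
  rw [hrpow]
  refine le_trans hm (mul_le_mul_of_nonneg_left ?_ hx0)
  rw [Real.exp_le_exp]
  have h1 : 1 - ε ≤ 1 - 2*ε₀ := by
    have h2 : min ε (1/2) ≤ ε := min_le_left _ _
    rw [hε₀def]; linarith only [h2]
  have h3 : (0:ℝ) ≤ u * Real.log u := mul_nonneg hu0.le hlogu0
  nlinarith only [h1, h3]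
end
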